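/- arXiv:1711.04349 — 3 statements merged into one kernel-verified Lean document; each statement's English description precedes it below -/
import Mathlib

section
/- Assume N ≥ 2. Under the permutation null distribution, E(R_{1,(a)}) = (N − K + |C₀|) · p₁ and E(R_{2,(a)}) = (N − K + |C₀|) · q₁. -/
open Finset MeasureTheory
open scoped BigOperators Classical

noncomputable section


lemma count_subset (N k : ℕ) (A : Finset (Fin N)) (hA : A.card ≤ k) :
    ((Finset.powersetCard k (univ : Finset (Fin N))).filter (fun S => A ⊆ S)).card
      = (N - A.card).choose (k - A.card) := by
  have hcard : (univ \ A).card = N - A.card := by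
    rw [card_sdiff_of_subset (subset_univ A), card_univ, Fintype.card_fin]
  rw [← hcard, ← Finset.card_powersetCard (k - A.card) (univ \ A)]
  apply Finset.card_bij' (fun S _ => S \ A) (fun T _ => T ∪ A)
  · intro S hS
    simp only [mem_filter, Finset.mem_powersetCard] at hS
    rw [Finset.mem_powersetCard]
    exact ⟨sdiff_subset_sdiff hS.1.1 le_rfl, by rw [card_sdiff_of_subset hS.2, hS.1.2]⟩
  · intro T hT
    rw [Finset.mem_powersetCard] at hT
    have hd : Disjoint T A := by
      intro x hx1 hx2 y hy
      have := hT.1 (hx1 hy)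
      simp only [mem_sdiff] at this
      exact absurd (hx2 hy) this.2
    simp only [mem_filter, Finset.mem_powersetCard]
    refine ⟨⟨subset_univ _, ?_⟩, subset_union_right⟩
    rw [card_union_of_disjoint hd, hT.2]
    omega
  · intro S hS
    simp only [mem_filter] at hS
    exact sdiff_union_of_subset hS.2
  · intro T hT
    rw [Finset.mem_powersetCard] at hT
    have hd : Disjoint T A := by
      intro x hx1 hx2 y hy
      have := hT.1 (hx1 hy)
      simp only [mem_sdiff] at this
      exact absurd (hx2 hy) this.2
    exact union_sdiff_cancel_right hd

lemma choose_id (N k : ℕ) (h2 : 2 ≤ k) (hk : k ≤ N) :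
    N.choose k * (k * (k - 1)) = (N * (N - 1)) * ((N - 2).choose (k - 2)) := by
  obtain ⟨k', rfl⟩ : ∃ k', k = k' + 2 := ⟨k - 2, by omega⟩
  obtain ⟨N', rfl⟩ : ∃ N', N = N' + 2 := ⟨N - 2, by omega⟩
  have h1 := Nat.add_one_mul_choose_eq (N' + 1) (k' + 1)
  have h2' := Nat.add_one_mul_choose_eq N' k'
  calc (N' + 2).choose (k' + 2) * ((k' + 2) * (k' + 2 - 1))
      = ((N' + 2).choose (k' + 2) * (k' + 2)) * (k' + 1) := by
        rw [show k' + 2 - 1 = k' + 1 from rfl]; ring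
    _ = ((N' + 1 + 1) * (N' + 1).choose (k' + 1)) * (k' + 1) := by rw [← h1]
    _ = (N' + 2) * ((N' + 1) * (N' + 0 + 1 - 1).choose k') := by
        rw [show N' + 0 + 1 - 1 = N' by omega, h2']; ring
    _ = _ := by norm_num; ring

lemma pair_sum (N k : ℕ) (hN2 : 2 ≤ N) (hk : k ≤ N) (i j : Fin N) (hij : i ≠ j) :
    (∑ S ∈ Finset.powersetCard k (univ : Finset (Fin N)),
        (if i ∈ S then (1 : ℝ) else 0) * (if j ∈ S then (1 : ℝ) else 0))
      = (N.choose k : ℝ) * ((k : ℝ) * ((k : ℝ) - 1) / ((N : ℝ) * ((N : ℝ) - 1))) := by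
  have hA : ({i, j} : Finset (Fin N)).card = 2 := by
    rw [card_insert_of_notMem (by simp [hij]), card_singleton]
  have hsum : (∑ S ∈ Finset.powersetCard k (univ : Finset (Fin N)),
      (if i ∈ S then (1 : ℝ) else 0) * (if j ∈ S then (1 : ℝ) else 0))
      = (((Finset.powersetCard k (univ : Finset (Fin N))).filter
          (fun S => ({i, j} : Finset (Fin N)) ⊆ S)).card : ℝ) := by
    rw [← Finset.sum_boole]
    apply Finset.sum_congr rfl
    intro S _
    by_cases h1 : i ∈ S <;> by_cases h2 : j ∈ S <;>
      simp [h1, h2, insert_subset_iff]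
  rw [hsum]
  rcases lt_or_ge k 2 with hk2 | hk2
  · have : ((Finset.powersetCard k (univ : Finset (Fin N))).filter
        (fun S => ({i, j} : Finset (Fin N)) ⊆ S)) = ∅ := by
      apply Finset.filter_eq_empty_iff.2
      intro S hS hsub
      rw [Finset.mem_powersetCard] at hS
      have := Finset.card_le_card hsub
      omega
    rw [this]
    interval_cases k <;> simp
  · rw [count_subset N k _ (hA ▸ hk2), hA]
    have hc0 : (N.choose k : ℝ) ≠ 0 := by
      exact_mod_cast (Nat.choose_pos hk).ne'
    have hN0 : (N : ℝ) * ((N : ℝ) - 1) ≠ 0 := by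
      have : (2 : ℝ) ≤ (N : ℝ) := by exact_mod_cast hN2
      intro h
      rcases mul_eq_zero.1 h with h | h <;> nlinarith
    have := choose_id N k hk2 hk
    have hcast : (N.choose k : ℝ) * ((k : ℝ) * ((k : ℝ) - 1))
        = ((N : ℝ) * ((N : ℝ) - 1)) * (((N - 2).choose (k - 2) : ℝ)) := by
      have e1 : ((k : ℝ) - 1) = ((k - 1 : ℕ) : ℝ) := by
        have : 1 ≤ k := by omega
        push_cast [this]; ring
      have e2 : ((N : ℝ) - 1) = ((N - 1 : ℕ) : ℝ) := by
        have : 1 ≤ N := by omega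
        push_cast [this]; ring
      rw [e1, e2]
      exact_mod_cast congrArg (Nat.cast : ℕ → ℝ) this
    rw [eq_comm]
    rw [mul_div_assoc', div_eq_iff hN0]
    linarith [hcast]


lemma Emain (K : ℕ) (m : Fin K → ℕ) (hm : ∀ u, 1 ≤ m u) (N : ℕ) (hN : N = ∑ u, m u)
    (hN2 : 2 ≤ N) (v : Fin N → Fin K)
    (hv : ∀ u, (Finset.univ.filter (fun i => v i = u)).card = m u)
    (C₀ : SimpleGraph (Fin K)) (k : ℕ) (hk : k ≤ N) :
    (∑ S ∈ Finset.powersetCard k (univ : Finset (Fin N)),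
      ((∑ u, ((S.filter (fun i => v i = u)).card : ℝ)
          * (((S.filter (fun i => v i = u)).card : ℝ) - 1) / (m u : ℝ))
        + ∑ e ∈ C₀.edgeFinset,
            Sym2.lift ⟨fun u w => ((S.filter (fun i => v i = u)).card : ℝ)
              * ((S.filter (fun i => v i = w)).card : ℝ) / ((m u : ℝ) * (m w : ℝ)),
              fun u w => by ring⟩ e))
    = (N.choose k : ℝ) * (((N : ℝ) - (K : ℝ) + (C₀.edgeFinset.card : ℝ))
        * ((k : ℝ) * ((k : ℝ) - 1) / ((N : ℝ) * ((N : ℝ) - 1)))) := by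
  set P := Finset.powersetCard k (univ : Finset (Fin N)) with hP
  set c : ℝ := (N.choose k : ℝ) with hc
  set p : ℝ := (k : ℝ) * ((k : ℝ) - 1) / ((N : ℝ) * ((N : ℝ) - 1)) with hp
  set F : Fin K → Finset (Fin N) := fun u => Finset.univ.filter (fun i => v i = u) with hF
  have hm0 : ∀ u, (m u : ℝ) ≠ 0 := fun u => by
    have := hm u; positivity
  have hcnt : ∀ (u : Fin K) (S : Finset (Fin N)),
      ((S.filter (fun i => v i = u)).card : ℝ)
        = ∑ i ∈ F u, (if i ∈ S then (1 : ℝ) else 0) := by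
    intro u S
    have heq : S.filter (fun i => v i = u) = (F u).filter (fun i => i ∈ S) := by
      ext i; simp [hF, Finset.mem_filter, and_comm]
    rw [heq, Finset.card_filter]
    push_cast
    rfl
  -- quadratic expansion
  have hquad : ∀ (u : Fin K) (S : Finset (Fin N)),
      ((S.filter (fun i => v i = u)).card : ℝ)
        * (((S.filter (fun i => v i = u)).card : ℝ) - 1)
      = ∑ q ∈ (F u).offDiag,
          (if q.1 ∈ S then (1 : ℝ) else 0) * (if q.2 ∈ S then (1 : ℝ) else 0) := by
    intro u S
    rw [hcnt]
    set f : Fin N → ℝ := fun i => if i ∈ S then 1 else 0 with hf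
    have hsq : (∑ i ∈ F u, f i) * (∑ i ∈ F u, f i)
        = ∑ q ∈ (F u) ×ˢ (F u), f q.1 * f q.2 := by
      rw [Finset.sum_mul_sum, ← Finset.sum_product']
    have hsplit : ∑ q ∈ (F u) ×ˢ (F u), f q.1 * f q.2
        = (∑ q ∈ (F u).diag, f q.1 * f q.2) + ∑ q ∈ (F u).offDiag, f q.1 * f q.2 := by
      rw [← Finset.diag_union_offDiag (F u),
        Finset.sum_union (Finset.disjoint_diag_offDiag (F u))]
    have hdiag : ∑ q ∈ (F u).diag, f q.1 * f q.2 = ∑ i ∈ F u, f i := by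
      rw [Finset.sum_diag]
      exact Finset.sum_congr rfl fun i _ => by by_cases h : i ∈ S <;> simp [hf, h]
    have := hsq.trans hsplit
    rw [hdiag] at this
    nlinarith [this]
  have hcross : ∀ (u w : Fin K) (S : Finset (Fin N)),
      ((S.filter (fun i => v i = u)).card : ℝ) * ((S.filter (fun i => v i = w)).card : ℝ)
      = ∑ i ∈ F u, ∑ j ∈ F w,
          (if i ∈ S then (1 : ℝ) else 0) * (if j ∈ S then (1 : ℝ) else 0) := by
    intro u w S
    rw [hcnt, hcnt, Finset.sum_mul_sum]
  have hcardF : ∀ u, (F u).card = m u := hv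
  -- sum over S of quadratic terms
  have hsum_quad : ∀ u : Fin K,
      ∑ S ∈ P, ((S.filter (fun i => v i = u)).card : ℝ)
        * (((S.filter (fun i => v i = u)).card : ℝ) - 1)
      = (m u : ℝ) * ((m u : ℝ) - 1) * (c * p) := by
    intro u
    rw [Finset.sum_congr rfl fun S _ => hquad u S, Finset.sum_comm]
    rw [Finset.sum_congr rfl (fun q hq => pair_sum N k hN2 hk q.1 q.2
      (Finset.mem_offDiag.1 hq).2.2)]
    rw [Finset.sum_const, nsmul_eq_mul, Finset.offDiag_card, hcardF]
    have h1 : m u ≤ m u * m u := Nat.le_mul_of_pos_left _ (hm u)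
    rw [Nat.cast_sub h1]
    push_cast
    ring
  have hsum_cross : ∀ u w : Fin K, u ≠ w →
      ∑ S ∈ P, ((S.filter (fun i => v i = u)).card : ℝ)
        * ((S.filter (fun i => v i = w)).card : ℝ)
      = (m u : ℝ) * (m w : ℝ) * (c * p) := by
    intro u w huw
    rw [Finset.sum_congr rfl fun S _ => hcross u w S, Finset.sum_comm]
    have hinner : ∀ i ∈ F u,
        (∑ S ∈ P, ∑ j ∈ F w,
          (if i ∈ S then (1 : ℝ) else 0) * (if j ∈ S then (1 : ℝ) else 0))
        = (m w : ℝ) * (c * p) := by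
      intro i hi
      rw [Finset.sum_comm]
      have : ∀ j ∈ F w, (∑ S ∈ P,
          (if i ∈ S then (1 : ℝ) else 0) * (if j ∈ S then (1 : ℝ) else 0)) = c * p := by
        intro j hj
        have hij : i ≠ j := by
          intro h
          apply huw
          have h1 : v i = u := (Finset.mem_filter.1 hi).2
          have h2 : v j = w := (Finset.mem_filter.1 hj).2
          rw [← h1, h, h2]
        exact pair_sum N k hN2 hk i j hij
      rw [Finset.sum_congr rfl this, Finset.sum_const, nsmul_eq_mul, hcardF]
    rw [Finset.sum_congr rfl hinner, Finset.sum_const, nsmul_eq_mul, hcardF]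
    ring
  -- assemble
  rw [Finset.sum_add_distrib]
  have hfirst : ∑ S ∈ P, ∑ u, ((S.filter (fun i => v i = u)).card : ℝ)
      * (((S.filter (fun i => v i = u)).card : ℝ) - 1) / (m u : ℝ)
      = ((N : ℝ) - (K : ℝ)) * (c * p) := by
    rw [Finset.sum_comm]
    have : ∀ u : Fin K, u ∈ (univ : Finset (Fin K)) →
        (∑ S ∈ P, ((S.filter (fun i => v i = u)).card : ℝ)
          * (((S.filter (fun i => v i = u)).card : ℝ) - 1) / (m u : ℝ))
        = ((m u : ℝ) - 1) * (c * p) := by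
      intro u _
      rw [← Finset.sum_div, hsum_quad u, eq_comm, eq_div_iff (hm0 u)]
      ring
    rw [Finset.sum_congr rfl this, ← Finset.sum_mul]
    congr 1
    rw [Finset.sum_sub_distrib, Finset.sum_const, Finset.card_univ, Fintype.card_fin,
      nsmul_eq_mul, mul_one]
    congr 1
    rw [hN]
    push_cast
    rfl
  have hsecond : ∑ S ∈ P, ∑ e ∈ C₀.edgeFinset,
      Sym2.lift ⟨fun u w => ((S.filter (fun i => v i = u)).card : ℝ)
        * ((S.filter (fun i => v i = w)).card : ℝ) / ((m u : ℝ) * (m w : ℝ)),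
        fun u w => by ring⟩ e
      = (C₀.edgeFinset.card : ℝ) * (c * p) := by
    rw [Finset.sum_comm]
    have : ∀ e ∈ C₀.edgeFinset, (∑ S ∈ P,
        Sym2.lift ⟨fun u w => ((S.filter (fun i => v i = u)).card : ℝ)
          * ((S.filter (fun i => v i = w)).card : ℝ) / ((m u : ℝ) * (m w : ℝ)),
          fun u w => by ring⟩ e) = c * p := by
      intro e he
      induction e using Sym2.ind with
      | _ u w =>
        have hadj : C₀.Adj u w := by
          rwa [SimpleGraph.mem_edgeFinset, SimpleGraph.mem_edgeSet] at he
        have huw : u ≠ w := hadj.ne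
        simp only [Sym2.lift_mk]
        rw [← Finset.sum_div, hsum_cross u w huw,
          div_eq_iff (mul_ne_zero (hm0 u) (hm0 w))]
        ring
    rw [Finset.sum_congr rfl this, Finset.sum_const, nsmul_eq_mul]
  rw [hfirst, hsecond]
  ring



/-- Expectations of the averaging within-sample edge-counts:
`E R_{1,(a)} = (N − K + |C₀|) p₁` and `E R_{2,(a)} = (N − K + |C₀|) q₁`
under the permutation null distribution. -/
theorem expectation_R1a_R2a
    -- number of distinct values and multiplicities
    (K : ℕ) (hK : 1 ≤ K) (m : Fin K → ℕ) (hm : ∀ u, 1 ≤ m u)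
    -- total sample size
    (N : ℕ) (hN : N = ∑ u, m u) (hN2 : 2 ≤ N)
    -- value map with prescribed fiber sizes
    (v : Fin N → Fin K)
    (hv : ∀ u, (Finset.univ.filter (fun i => v i = u)).card = m u)
    -- similarity graph on the distinct values
    (C₀ : SimpleGraph (Fin K))
    -- size of sample 1 and sample 2
    (n₁ n₂ : ℕ) (hn₁ : 1 ≤ n₁) (hn₁' : n₁ ≤ N - 1) (hn₂ : n₂ = N - n₁)
    -- expectation under the permutation null distribution (uniform over
    -- all `n₁`-element subsets of `Fin N`)
    (E : (Finset (Fin N) → ℝ) → ℝ)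
    (hE : ∀ f, E f =
      (∑ S ∈ Finset.powersetCard n₁ (Finset.univ : Finset (Fin N)), f S) / (N.choose n₁ : ℝ))
    -- within-group counts
    (n1 : Fin K → Finset (Fin N) → ℝ)
    (hn1 : ∀ u S, n1 u S = ((S.filter (fun i => v i = u)).card : ℝ))
    (n2 : Fin K → Finset (Fin N) → ℝ)
    (hn2 : ∀ u S, n2 u S = (m u : ℝ) - n1 u S)
    -- the averaging statistics
    (R1a : Finset (Fin N) → ℝ)
    (hR1a : ∀ S, R1a S = ∑ u, n1 u S * (n1 u S - 1) / (m u : ℝ)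
        + ∑ e ∈ C₀.edgeFinset,
            Sym2.lift ⟨fun u w => n1 u S * n1 w S / ((m u : ℝ) * (m w : ℝ)),
              fun u w => by ring⟩ e)
    (R2a : Finset (Fin N) → ℝ)
    (hR2a : ∀ S, R2a S = ∑ u, n2 u S * (n2 u S - 1) / (m u : ℝ)
        + ∑ e ∈ C₀.edgeFinset,
            Sym2.lift ⟨fun u w => n2 u S * n2 w S / ((m u : ℝ) * (m w : ℝ)),
              fun u w => by ring⟩ e)
    -- the constants p₁ and q₁
    (p₁ q₁ : ℝ)
    (hp₁ : p₁ = (n₁ : ℝ) * ((n₁ : ℝ) - 1) / ((N : ℝ) * ((N : ℝ) - 1)))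
    (hq₁ : q₁ = (n₂ : ℝ) * ((n₂ : ℝ) - 1) / ((N : ℝ) * ((N : ℝ) - 1))) :
    E R1a = ((N : ℝ) - (K : ℝ) + (C₀.edgeFinset.card : ℝ)) * p₁ ∧
    E R2a = ((N : ℝ) - (K : ℝ) + (C₀.edgeFinset.card : ℝ)) * q₁ := by
  have hn1N : n₁ ≤ N := by omega
  have hn₂N : n₂ ≤ N := by omega
  have hch1 : (0 : ℝ) < (N.choose n₁ : ℝ) := by exact_mod_cast Nat.choose_pos hn1N
  have hchne : (N.choose n₁ : ℝ) ≠ 0 := ne_of_gt hch1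
  have hchsymm : N.choose n₂ = N.choose n₁ := by
    rw [hn₂]; exact Nat.choose_symm hn1N
  set G : Finset (Fin N) → ℝ := fun S =>
    (∑ u, ((S.filter (fun i => v i = u)).card : ℝ)
        * (((S.filter (fun i => v i = u)).card : ℝ) - 1) / (m u : ℝ))
      + ∑ e ∈ C₀.edgeFinset,
          Sym2.lift ⟨fun u w => ((S.filter (fun i => v i = u)).card : ℝ)
            * ((S.filter (fun i => v i = w)).card : ℝ) / ((m u : ℝ) * (m w : ℝ)),
            fun u w => by ring⟩ e with hG
  have key1 : ∀ S, R1a S = G S := by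
    intro S
    rw [hR1a, hG]
    congr 1
    · exact Finset.sum_congr rfl fun u _ => by rw [hn1]
    · apply Finset.sum_congr rfl
      intro e he
      induction e using Sym2.ind with
      | _ u w => simp only [Sym2.lift_mk]; rw [hn1, hn1]
  have n2eq : ∀ (u : Fin K) (S : Finset (Fin N)),
      n2 u S = ((((univ : Finset (Fin N)) \ S).filter (fun i => v i = u)).card : ℝ) := by
    intro u S
    rw [hn2, hn1]
    have h1 : ((univ : Finset (Fin N)) \ S).filter (fun i => v i = u)
        = (Finset.univ.filter (fun i => v i = u)) \ (S.filter (fun i => v i = u)) := by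
      ext i; simp only [Finset.mem_filter, Finset.mem_sdiff, Finset.mem_univ, true_and]
      tauto
    have hle : (S.filter (fun i => v i = u)).card ≤ m u := by
      rw [← hv u]
      exact Finset.card_le_card (Finset.filter_subset_filter _ (Finset.subset_univ S))
    rw [h1, Finset.card_sdiff_of_subset (Finset.filter_subset_filter _ (Finset.subset_univ S)), hv u,
      Nat.cast_sub hle]
  have key2 : ∀ S, R2a S = G ((univ : Finset (Fin N)) \ S) := by
    intro S
    rw [hR2a, hG]
    congr 1
    · exact Finset.sum_congr rfl fun u _ => by rw [n2eq]
    · apply Finset.sum_congr rfl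
      intro e he
      induction e using Sym2.ind with
      | _ u w => simp only [Sym2.lift_mk]; rw [n2eq, n2eq]
  constructor
  · rw [hE, Finset.sum_congr rfl fun S _ => key1 S,
      Emain K m hm N hN hN2 v hv C₀ n₁ hn1N, hp₁,
      mul_comm, mul_div_assoc, div_self hchne, mul_one]
  · rw [hE, Finset.sum_congr rfl fun S _ => key2 S]
    have hbij : ∑ S ∈ Finset.powersetCard n₁ (univ : Finset (Fin N)),
        G ((univ : Finset (Fin N)) \ S)
        = ∑ T ∈ Finset.powersetCard n₂ (univ : Finset (Fin N)), G T := by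
      apply Finset.sum_nbij' (i := fun S => (univ : Finset (Fin N)) \ S)
        (j := fun T => (univ : Finset (Fin N)) \ T)
      · intro S hS
        rw [Finset.mem_powersetCard_univ] at hS ⊢
        rw [Finset.card_sdiff_of_subset (Finset.subset_univ S), Finset.card_univ, Fintype.card_fin, hS]
        omega
      · intro T hT
        rw [Finset.mem_powersetCard_univ] at hT ⊢
        rw [Finset.card_sdiff_of_subset (Finset.subset_univ T), Finset.card_univ, Fintype.card_fin, hT]
        omega
      · intro S _
        exact Finset.sdiff_sdiff_eq_self (Finset.subset_univ S)
      · intro T _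
        exact Finset.sdiff_sdiff_eq_self (Finset.subset_univ T)
      · intro S _
        rfl
    rw [hbij, Emain K m hm N hN hN2 v hv C₀ n₂ hn₂N, hq₁, ← hchsymm,
      mul_comm, mul_div_assoc]
    rw [hchsymm, div_self hchne, mul_one]
end
end

section
/- Assume N ≥ 4. Under the permutation null distribution, Var(R_{1,(a)}) = 4(p₂ − p₃)( N − K + 2|C₀| + ∑_u deg_{C₀}(u)²/(4m(u)) − ∑_u deg_{C₀}(u)/m(u) ) + (p₃ − p₁²)(N − K + |C₀|)² + (p₁ − 2p₂ + p₃) ∑_{{u,w} edge of C₀} 1/(m(u)m(w)) + 2(p₁ − 4p₂ + 3p₃)(K − ∑_u 1/m(u)); and Var(R_{2,(a)}) is given by the same formula with q₁, q₂, q₃ in place of p₁, p₂, p₃. -/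
open Finset MeasureTheory
open scoped BigOperators Classical

noncomputable section


set_option linter.unusedSectionVars false

lemma dart_sum {V : Type*} [Fintype V] (G : SimpleGraph V) [DecidableRel G.Adj]
    (f : V → V → ℝ) (hf : ∀ u w, f u w = f w u) :
    ∑ u, ∑ w ∈ G.neighborFinset u, f u w
      = 2 * ∑ e ∈ G.edgeFinset, Sym2.lift ⟨f, hf⟩ e := by
  classical
  have h1 : ∑ d : G.Dart, f d.fst d.snd = ∑ u, ∑ w ∈ G.neighborFinset u, f u w := by
    rw [← Finset.sum_fiberwise_of_maps_to (g := fun d : G.Dart => d.fst)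
      (fun d _ => Finset.mem_univ _)]
    refine Finset.sum_congr rfl fun u _ => ?_
    rw [show (Finset.univ.filter fun d : G.Dart => d.fst = u) = _ from G.dart_fst_fiber u,
      Finset.sum_image (fun a _ b _ h => G.dartOfNeighborSet_injective u h)]
    rw [G.neighborFinset_def, ← Finset.sum_set_coe (f := fun w => f u w)]
    exact Finset.sum_congr rfl fun x _ => rfl
  have h2 : ∑ d : G.Dart, f d.fst d.snd = ∑ e ∈ G.edgeFinset, 2 * Sym2.lift ⟨f, hf⟩ e := by
    rw [← Finset.sum_fiberwise_of_maps_to (t := G.edgeFinset) (g := fun d : G.Dart => d.edge)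
      (fun d _ => SimpleGraph.mem_edgeFinset.mpr d.edge_mem)]
    refine Finset.sum_congr rfl fun e he => ?_
    have hcard : (Finset.univ.filter fun d : G.Dart => d.edge = e).card = 2 :=
      G.dart_edge_fiber_card e (SimpleGraph.mem_edgeFinset.mp he)
    have : ∀ d ∈ Finset.univ.filter fun d : G.Dart => d.edge = e,
        f d.fst d.snd = Sym2.lift ⟨f, hf⟩ e := by
      intro d hd
      rw [Finset.mem_filter] at hd
      rw [← hd.2]
      rfl
    rw [Finset.sum_congr rfl this, Finset.sum_const, hcard]
    simp [two_mul]
  rw [← h1, h2, Finset.mul_sum]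

lemma choose_desc : ∀ (t : ℕ) {n N : ℕ}, t ≤ n → n ≤ N →
    (N - t).choose (n - t) * N.descFactorial t = N.choose n * n.descFactorial t := by
  intro t
  induction t with
  | zero => simp
  | succ t ih =>
    intro n N htn hnN
    have ht : t ≤ n := Nat.le_of_succ_le htn
    have hA : 1 ≤ N - t := by omega
    have hB : 1 ≤ n - t := by omega
    rw [Nat.descFactorial_succ, Nat.descFactorial_succ]
    have key := Nat.add_one_mul_choose_eq (N - t - 1) (n - t - 1)
    have e1 : N - t - 1 + 1 = N - t := by omega
    have e2 : n - t - 1 + 1 = n - t := by omega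
    rw [e1, e2] at key
    have e3 : N - (t + 1) = N - t - 1 := by omega
    have e4 : n - (t + 1) = n - t - 1 := by omega
    calc (N - (t+1)).choose (n - (t+1)) * ((N - t) * N.descFactorial t)
        = ((N - t) * (N - t - 1).choose (n - t - 1)) * N.descFactorial t := by
          rw [e3, e4]; ring
      _ = ((N - t).choose (n - t) * (n - t)) * N.descFactorial t := by rw [key]
      _ = (n - t) * ((N - t).choose (n - t) * N.descFactorial t) := by ring
      _ = (n - t) * (N.choose n * n.descFactorial t) := by rw [ih ht hnN]
      _ = N.choose n * ((n - t) * n.descFactorial t) := by ring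

lemma count_superset (N n : ℕ) (T : Finset (Fin N)) (h : T.card ≤ n) :
    ((Finset.powersetCard n (Finset.univ : Finset (Fin N))).filter (fun S => T ⊆ S)).card
      = (N - T.card).choose (n - T.card) := by
  classical
  have hc : ((Finset.univ : Finset (Fin N)) \ T).card = N - T.card := by
    rw [Finset.card_sdiff_of_subset (Finset.subset_univ T), Finset.card_univ, Fintype.card_fin]
  rw [← hc, ← Finset.card_powersetCard (n - T.card) ((Finset.univ : Finset (Fin N)) \ T)]
  apply Finset.card_bij' (fun S _ => S \ T) (fun S' _ => S' ∪ T)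
  · intro S hS
    rw [Finset.mem_filter, Finset.mem_powersetCard] at hS
    rw [Finset.mem_powersetCard]
    exact ⟨Finset.sdiff_subset_sdiff hS.1.1 le_rfl,
      by rw [Finset.card_sdiff_of_subset hS.2, hS.1.2]⟩
  · intro S' hS'
    rw [Finset.mem_powersetCard] at hS'
    rw [Finset.mem_filter, Finset.mem_powersetCard]
    have hd : Disjoint S' T := Finset.disjoint_of_subset_left hS'.1 (Finset.sdiff_disjoint)
    refine ⟨⟨Finset.subset_univ _, ?_⟩, Finset.subset_union_right⟩
    rw [Finset.card_union_of_disjoint hd, hS'.2]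
    omega
  · intro S hS
    rw [Finset.mem_filter] at hS
    rw [Finset.sdiff_union_self_eq_union, Finset.union_eq_left.mpr hS.2]
  · intro S' hS'
    rw [Finset.mem_powersetCard] at hS'
    have hd : Disjoint S' T := Finset.disjoint_of_subset_left hS'.1 (Finset.sdiff_disjoint)
    rw [Finset.union_sdiff_right, Finset.sdiff_eq_self_of_disjoint hd]

lemma card_univ_sub {N : ℕ} (T : Finset (Fin N)) : (Finset.univ \ T).card = N - T.card := by
  rw [Finset.card_sdiff_of_subset (Finset.subset_univ T), Finset.card_univ, Fintype.card_fin]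

variable {ι : Type*} [Fintype ι] [DecidableEq ι]

/-- indicator -/
noncomputable def indi (i : ι) (S : Finset ι) : ℝ := if i ∈ S then 1 else 0

lemma indi_prod2 (i j : ι) (S : Finset ι) :
    indi i S * indi j S = if ({i, j} : Finset ι) ⊆ S then 1 else 0 := by
  by_cases hi : i ∈ S <;> by_cases hj : j ∈ S <;>
    simp [indi, hi, hj, Finset.insert_subset_iff]

lemma indi_prod4 (i j k l : ι) (S : Finset ι) :
    indi i S * indi j S * indi k S * indi l S
      = if ({i, j, k, l} : Finset ι) ⊆ S then 1 else 0 := by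
  by_cases hi : i ∈ S <;> by_cases hj : j ∈ S <;> by_cases hk : k ∈ S <;> by_cases hl : l ∈ S <;>
    simp [indi, hi, hj, hk, hl, Finset.insert_subset_iff]

/-- pointwise delta expansion of `rr (card {i,j,k,l})` against `a i j * a k l` -/
lemma delta_pointwise (a : ι → ι → ℝ) (hdiag : ∀ i, a i i = 0) (rr : ℕ → ℝ)
    (i j k l : ι) :
    a i j * a k l * rr ({i, j, k, l} : Finset ι).card
      = a i j * a k l * (rr 4
        + (rr 3 - rr 4) * ((if i = k then (1:ℝ) else 0) + (if i = l then (1:ℝ) else 0)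
            + (if j = k then (1:ℝ) else 0) + (if j = l then (1:ℝ) else 0))
        + (rr 2 - 2 * rr 3 + rr 4) * ((if i = k then (1:ℝ) else 0) * (if j = l then (1:ℝ) else 0)
            + (if i = l then (1:ℝ) else 0) * (if j = k then (1:ℝ) else 0))) := by
  rcases eq_or_ne i j with rfl | hij
  · simp [hdiag]
  rcases eq_or_ne k l with rfl | hkl
  · simp [hdiag]
  by_cases hik : i = k <;> by_cases hil : i = l <;> by_cases hjk : j = k <;>
    by_cases hjl : j = l <;>
    simp_all [Finset.card_insert_of_notMem, Finset.mem_insert, Finset.insert_comm,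
      Finset.pair_comm, Finset.card_pair] <;> (try ring) <;> (try tauto) <;>
    (try rw [show ({l, k} : Finset ι).card = 2 from Finset.card_pair fun h => hkl h.symm]) <;>
    (try norm_num)

set_option maxHeartbeats 1000000 in
lemma var_core (a : ι → ι → ℝ) (hsym : ∀ i j, a i j = a j i) (hdiag : ∀ i, a i i = 0)
    (PC : Finset (Finset ι)) (c : ℝ) (hc : c ≠ 0) (hcard : (PC.card : ℝ) = c)
    (rr : ℕ → ℝ)
    (hmom : ∀ T : Finset ι, T.card ≤ 4 →
      ∑ S ∈ PC, (if T ⊆ S then (1:ℝ) else 0) = c * rr T.card) :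
    (∑ S ∈ PC, ((∑ i, ∑ j, a i j * indi i S * indi j S)
        - (∑ S' ∈ PC, (∑ i, ∑ j, a i j * indi i S' * indi j S'))/c)^2)/c
      = 4 * (rr 3 - rr 4) * (∑ i, (∑ j, a i j)^2)
        + (rr 4 - (rr 2)^2) * (∑ i, ∑ j, a i j)^2
        + 2 * (rr 2 - 2*rr 3 + rr 4) * (∑ i, ∑ j, (a i j)^2) := by
  classical
  set W : Finset ι → ℝ := fun S => ∑ i, ∑ j, a i j * indi i S * indi j S with hW
  set A₀ : ℝ := ∑ i, ∑ j, a i j with hA₀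
  set D : ℝ := ∑ i, (∑ j, a i j)^2 with hD
  set A₂ : ℝ := ∑ i, ∑ j, (a i j)^2 with hA₂
  have hc4 : ∀ i j k l : ι, ({i,j,k,l} : Finset ι).card ≤ 4 := fun i j k l => by
    have h1 := Finset.card_insert_le i ({j,k,l} : Finset ι)
    have h2 := Finset.card_insert_le j ({k,l} : Finset ι)
    have h3 := Finset.card_insert_le k ({l} : Finset ι)
    have h4 : ({l} : Finset ι).card = 1 := Finset.card_singleton l
    omega
  -- second moments
  have hmom2 : ∀ i j : ι, i ≠ j → ∑ S ∈ PC, indi i S * indi j S = c * rr 2 := by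
    intro i j hij
    have h2 : ({i,j} : Finset ι).card = 2 := Finset.card_pair hij
    calc ∑ S ∈ PC, indi i S * indi j S
        = ∑ S ∈ PC, (if ({i,j} : Finset ι) ⊆ S then (1:ℝ) else 0) :=
          Finset.sum_congr rfl fun S _ => indi_prod2 i j S
      _ = c * rr ({i,j} : Finset ι).card := hmom _ (by omega)
      _ = c * rr 2 := by rw [h2]
  have hmom4 : ∀ i j k l : ι, ∑ S ∈ PC, indi i S * indi j S * indi k S * indi l S
      = c * rr ({i,j,k,l} : Finset ι).card := by
    intro i j k l
    calc ∑ S ∈ PC, indi i S * indi j S * indi k S * indi l S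
        = ∑ S ∈ PC, (if ({i,j,k,l} : Finset ι) ⊆ S then (1:ℝ) else 0) :=
          Finset.sum_congr rfl fun S _ => indi_prod4 i j k l S
      _ = c * rr _ := hmom _ (hc4 i j k l)
  -- mean
  have hmean : ∑ S ∈ PC, W S = c * (rr 2 * A₀) := by
    rw [hW, Finset.sum_comm]
    have : ∀ i, ∑ S ∈ PC, ∑ j, a i j * indi i S * indi j S
        = ∑ j, a i j * (c * rr 2) := by
      intro i
      rw [Finset.sum_comm]
      refine Finset.sum_congr rfl fun j _ => ?_
      rcases eq_or_ne i j with rfl | hij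
      · simp [hdiag]
      · calc ∑ S ∈ PC, a i j * indi i S * indi j S
            = a i j * ∑ S ∈ PC, indi i S * indi j S := by
              rw [Finset.mul_sum]; exact Finset.sum_congr rfl fun S _ => by ring
          _ = a i j * (c * rr 2) := by rw [hmom2 i j hij]
    calc ∑ i, ∑ S ∈ PC, ∑ j, a i j * indi i S * indi j S
        = ∑ i, ∑ j, a i j * (c * rr 2) := Finset.sum_congr rfl fun i _ => this i
      _ = c * (rr 2 * A₀) := by
          simp only [← Finset.sum_mul, hA₀]; ring
  -- fourth moment expansion
  have pull2 : ∀ (b₁ b₂ : ℝ) (t : ι → ι → ι → ι → ℝ),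
      ∑ i, ∑ k, ∑ j, ∑ l, b₁ * (b₂ * t i k j l)
        = b₁ * (b₂ * ∑ i, ∑ k, ∑ j, ∑ l, t i k j l) := by
    intro b₁ b₂ t
    simp only [← Finset.mul_sum]
  have hrow : ∀ i, ∑ k, a k i = ∑ k, a i k := fun i => Finset.sum_congr rfl fun k _ => hsym k i
  -- the seven collapse sums
  have Sconst : ∑ i, ∑ k, ∑ j, ∑ l, a i j * a k l = A₀ * A₀ := by
    have h1 : ∀ i k : ι, ∑ j, ∑ l, a i j * a k l = (∑ j, a i j) * (∑ l, a k l) :=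
      fun i k => (Finset.sum_mul_sum _ _ _ _).symm
    calc ∑ i, ∑ k, ∑ j, ∑ l, a i j * a k l
        = ∑ i, ∑ k, (∑ j, a i j) * (∑ l, a k l) :=
          Finset.sum_congr rfl fun i _ => Finset.sum_congr rfl fun k _ => h1 i k
      _ = (∑ i, ∑ j, a i j) * (∑ k, ∑ l, a k l) := (Finset.sum_mul_sum _ _ _ _).symm
      _ = A₀ * A₀ := by rw [hA₀]
  have Sik : ∑ i, ∑ k, ∑ j, ∑ l, a i j * a k l * (if i = k then (1:ℝ) else 0) = D := by
    rw [hD]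
    refine Finset.sum_congr rfl fun i _ => ?_
    calc ∑ k, ∑ j, ∑ l, a i j * a k l * (if i = k then (1:ℝ) else 0)
        = ∑ k, (if i = k then (∑ j, a i j) * (∑ l, a k l) else 0) := by
          refine Finset.sum_congr rfl fun k _ => ?_
          by_cases h : i = k
          · subst h
            simp only [if_true, mul_one]
            exact (Finset.sum_mul_sum _ _ _ _).symm
          · simp [h]
      _ = (∑ j, a i j) * (∑ l, a i l) := by simp
      _ = (∑ j, a i j)^2 := by rw [sq]
  have Sil : ∑ i, ∑ k, ∑ j, ∑ l, a i j * a k l * (if i = l then (1:ℝ) else 0) = D := by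
    rw [hD]
    refine Finset.sum_congr rfl fun i _ => ?_
    have h1 : ∀ k j : ι, ∑ l, a i j * a k l * (if i = l then (1:ℝ) else 0) = a i j * a k i := by
      intro k j
      simp [mul_ite]
    calc ∑ k, ∑ j, ∑ l, a i j * a k l * (if i = l then (1:ℝ) else 0)
        = ∑ k, ∑ j, a i j * a k i :=
          Finset.sum_congr rfl fun k _ => Finset.sum_congr rfl fun j _ => h1 k j
      _ = ∑ j, ∑ k, a i j * a k i := Finset.sum_comm
      _ = ∑ j, a i j * ∑ k, a k i := by
          refine Finset.sum_congr rfl fun j _ => ?_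
          rw [Finset.mul_sum]
      _ = (∑ j, a i j) * (∑ k, a i k) := by rw [← Finset.sum_mul, hrow i]
      _ = (∑ j, a i j)^2 := by rw [sq]
  have Sjk : ∑ i, ∑ k, ∑ j, ∑ l, a i j * a k l * (if j = k then (1:ℝ) else 0) = D := by
    have h1 : ∀ i, ∑ k, ∑ j, ∑ l, a i j * a k l * (if j = k then (1:ℝ) else 0)
        = ∑ j, ∑ l, a i j * a j l := by
      intro i
      rw [Finset.sum_comm]
      refine Finset.sum_congr rfl fun j _ => ?_
      calc ∑ k, ∑ l, a i j * a k l * (if j = k then (1:ℝ) else 0)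
          = ∑ k, (if j = k then ∑ l, a i j * a k l else 0) := by
            refine Finset.sum_congr rfl fun k _ => ?_
            by_cases h : j = k <;> simp [h]
        _ = ∑ l, a i j * a j l := by simp
    calc ∑ i, ∑ k, ∑ j, ∑ l, a i j * a k l * (if j = k then (1:ℝ) else 0)
        = ∑ i, ∑ j, ∑ l, a i j * a j l := Finset.sum_congr rfl fun i _ => h1 i
      _ = ∑ j, ∑ i, ∑ l, a i j * a j l := Finset.sum_comm
      _ = ∑ j, (∑ i, a i j) * (∑ l, a j l) := by
          refine Finset.sum_congr rfl fun j _ => ?_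
          rw [Finset.sum_mul_sum]
      _ = ∑ j, (∑ i, a j i) * (∑ l, a j l) := by
          refine Finset.sum_congr rfl fun j _ => ?_
          rw [hrow j]
      _ = D := by rw [hD]; exact Finset.sum_congr rfl fun j _ => (sq _).symm
  have Sjl : ∑ i, ∑ k, ∑ j, ∑ l, a i j * a k l * (if j = l then (1:ℝ) else 0) = D := by
    have h1 : ∀ i k j : ι, ∑ l, a i j * a k l * (if j = l then (1:ℝ) else 0) = a i j * a k j := by
      intro i k j
      simp [mul_ite]
    calc ∑ i, ∑ k, ∑ j, ∑ l, a i j * a k l * (if j = l then (1:ℝ) else 0)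
        = ∑ i, ∑ k, ∑ j, a i j * a k j :=
          Finset.sum_congr rfl fun i _ => Finset.sum_congr rfl fun k _ =>
            Finset.sum_congr rfl fun j _ => h1 i k j
      _ = ∑ i, ∑ j, ∑ k, a i j * a k j :=
          Finset.sum_congr rfl fun i _ => Finset.sum_comm
      _ = ∑ j, ∑ i, ∑ k, a i j * a k j := Finset.sum_comm
      _ = ∑ j, (∑ i, a i j) * (∑ k, a k j) := by
          refine Finset.sum_congr rfl fun j _ => ?_
          rw [Finset.sum_mul_sum]
      _ = ∑ j, (∑ i, a j i) * (∑ k, a j k) := by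
          refine Finset.sum_congr rfl fun j _ => ?_
          rw [hrow j]
      _ = D := by rw [hD]; exact Finset.sum_congr rfl fun j _ => (sq _).symm
  have Sikjl : ∑ i, ∑ k, ∑ j, ∑ l,
      a i j * a k l * ((if i = k then (1:ℝ) else 0) * (if j = l then (1:ℝ) else 0)) = A₂ := by
    rw [hA₂]
    refine Finset.sum_congr rfl fun i _ => ?_
    calc ∑ k, ∑ j, ∑ l, a i j * a k l * ((if i = k then (1:ℝ) else 0) * (if j = l then (1:ℝ) else 0))
        = ∑ k, (if i = k then ∑ j, a i j * a k j else 0) := by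
          refine Finset.sum_congr rfl fun k _ => ?_
          by_cases h : i = k
          · subst h
            simp only [if_true, one_mul]
            refine Finset.sum_congr rfl fun j _ => ?_
            simp [mul_ite]
          · simp [h]
      _ = ∑ j, a i j * a i j := by simp
      _ = ∑ j, (a i j)^2 := Finset.sum_congr rfl fun j _ => (sq _).symm
  have Siljk : ∑ i, ∑ k, ∑ j, ∑ l,
      a i j * a k l * ((if i = l then (1:ℝ) else 0) * (if j = k then (1:ℝ) else 0)) = A₂ := by
    rw [hA₂]
    refine Finset.sum_congr rfl fun i _ => ?_
    have h1 : ∀ k j : ι, ∑ l, a i j * a k l * ((if i = l then (1:ℝ) else 0) * (if j = k then (1:ℝ) else 0))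
        = a i j * a k i * (if j = k then (1:ℝ) else 0) := by
      intro k j
      by_cases h : j = k <;> simp [h, mul_ite]
    calc ∑ k, ∑ j, ∑ l, a i j * a k l * ((if i = l then (1:ℝ) else 0) * (if j = k then (1:ℝ) else 0))
        = ∑ k, ∑ j, a i j * a k i * (if j = k then (1:ℝ) else 0) :=
          Finset.sum_congr rfl fun k _ => Finset.sum_congr rfl fun j _ => h1 k j
      _ = ∑ k, a i k * a k i := by
          refine Finset.sum_congr rfl fun k _ => ?_
          simp [mul_ite]
      _ = ∑ k, (a i k)^2 := by
          refine Finset.sum_congr rfl fun k _ => ?_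
          rw [← hsym i k, sq]
  -- pointwise expansion
  have point : ∀ i j k l : ι, a i j * a k l * (c * rr ({i,j,k,l} : Finset ι).card)
      = c * (rr 4 * (a i j * a k l))
        + c * ((rr 3 - rr 4) * (a i j * a k l * (if i = k then (1:ℝ) else 0)))
        + c * ((rr 3 - rr 4) * (a i j * a k l * (if i = l then (1:ℝ) else 0)))
        + c * ((rr 3 - rr 4) * (a i j * a k l * (if j = k then (1:ℝ) else 0)))
        + c * ((rr 3 - rr 4) * (a i j * a k l * (if j = l then (1:ℝ) else 0)))
        + c * ((rr 2 - 2*rr 3 + rr 4) * (a i j * a k l * ((if i = k then (1:ℝ) else 0) * (if j = l then (1:ℝ) else 0))))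
        + c * ((rr 2 - 2*rr 3 + rr 4) * (a i j * a k l * ((if i = l then (1:ℝ) else 0) * (if j = k then (1:ℝ) else 0)))) := by
    intro i j k l
    have h := delta_pointwise a hdiag rr i j k l
    calc a i j * a k l * (c * rr ({i,j,k,l} : Finset ι).card)
        = c * (a i j * a k l * rr ({i,j,k,l} : Finset ι).card) := by ring
      _ = c * (a i j * a k l * (rr 4
            + (rr 3 - rr 4) * ((if i = k then (1:ℝ) else 0) + (if i = l then (1:ℝ) else 0)
                + (if j = k then (1:ℝ) else 0) + (if j = l then (1:ℝ) else 0))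
            + (rr 2 - 2 * rr 3 + rr 4) * ((if i = k then (1:ℝ) else 0) * (if j = l then (1:ℝ) else 0)
                + (if i = l then (1:ℝ) else 0) * (if j = k then (1:ℝ) else 0)))) := by rw [h]
      _ = _ := by ring
  have hWsq : ∀ S, (W S)^2
      = ∑ i, ∑ k, ∑ j, ∑ l, a i j * a k l * (indi i S * indi j S * indi k S * indi l S) := by
    intro S
    rw [hW]
    simp only []
    rw [sq, Finset.sum_mul_sum]
    refine Finset.sum_congr rfl fun i _ => Finset.sum_congr rfl fun k _ => ?_
    rw [Finset.sum_mul_sum]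
    exact Finset.sum_congr rfl fun j _ => Finset.sum_congr rfl fun l _ => by ring
  have hsq : ∑ S ∈ PC, (W S)^2
      = c * (rr 4 * (A₀ * A₀) + 4*(rr 3 - rr 4)*D + 2*(rr 2 - 2*rr 3 + rr 4)*A₂) := by
    calc ∑ S ∈ PC, (W S)^2
        = ∑ S ∈ PC, ∑ i, ∑ k, ∑ j, ∑ l,
            a i j * a k l * (indi i S * indi j S * indi k S * indi l S) :=
          Finset.sum_congr rfl fun S _ => hWsq S
      _ = ∑ i, ∑ k, ∑ j, ∑ l, ∑ S ∈ PC,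
            a i j * a k l * (indi i S * indi j S * indi k S * indi l S) := by
          rw [Finset.sum_comm]
          refine Finset.sum_congr rfl fun i _ => ?_
          rw [Finset.sum_comm]
          refine Finset.sum_congr rfl fun k _ => ?_
          rw [Finset.sum_comm]
          refine Finset.sum_congr rfl fun j _ => ?_
          rw [Finset.sum_comm]
      _ = ∑ i, ∑ k, ∑ j, ∑ l, a i j * a k l * (c * rr ({i,j,k,l} : Finset ι).card) := by
          refine Finset.sum_congr rfl fun i _ => Finset.sum_congr rfl fun k _ =>
            Finset.sum_congr rfl fun j _ => Finset.sum_congr rfl fun l _ => ?_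
          rw [← Finset.mul_sum, hmom4 i j k l]
      _ = c * (rr 4 * (A₀ * A₀) + 4*(rr 3 - rr 4)*D + 2*(rr 2 - 2*rr 3 + rr 4)*A₂) := by
          rw [Finset.sum_congr rfl fun i _ => Finset.sum_congr rfl fun k _ =>
            Finset.sum_congr rfl fun j _ => Finset.sum_congr rfl fun l _ =>
              point i j k l]
          simp only [Finset.sum_add_distrib]
          rw [pull2, pull2, pull2, pull2, pull2, pull2, pull2]
          rw [Sconst, Sik, Sil, Sjk, Sjl, Sikjl, Siljk]
          ring
  -- variance expansion
  have hvar : ∑ S ∈ PC, (W S - (∑ S' ∈ PC, W S')/c)^2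
      = ∑ S ∈ PC, (W S)^2 - 2*((∑ S' ∈ PC, W S')/c)*(∑ S ∈ PC, W S)
        + (PC.card : ℝ) * ((∑ S' ∈ PC, W S')/c)^2 := by
    set μ := (∑ S' ∈ PC, W S')/c with hμ
    calc ∑ S ∈ PC, (W S - μ)^2
        = ∑ S ∈ PC, ((W S)^2 - 2*μ*(W S) + μ^2) :=
          Finset.sum_congr rfl fun S _ => by ring
      _ = _ := by
          rw [Finset.sum_add_distrib, Finset.sum_sub_distrib, Finset.sum_const,
            ← Finset.mul_sum, nsmul_eq_mul]
  rw [hvar, hsq, hmean, hcard]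
  field_simp
  ring

lemma hmom_builder (N n : ℕ) (hnN : n ≤ N) (T : Finset (Fin N)) (hT : T.card ≤ N) :
    ∑ S ∈ Finset.powersetCard n (Finset.univ : Finset (Fin N)), (if T ⊆ S then (1:ℝ) else 0)
      = (N.choose n : ℝ) * ((n.descFactorial T.card : ℝ) / (N.descFactorial T.card : ℝ)) := by
  classical
  have hsum : ∑ S ∈ Finset.powersetCard n (Finset.univ : Finset (Fin N)),
      (if T ⊆ S then (1:ℝ) else 0)
      = (((Finset.powersetCard n (Finset.univ : Finset (Fin N))).filter
          (fun S => T ⊆ S)).card : ℝ) := by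
    rw [Finset.sum_boole]
  have hDne : ((N.descFactorial T.card : ℕ) : ℝ) ≠ 0 := by
    have : N.descFactorial T.card ≠ 0 := fun h0 => by
      have := Nat.descFactorial_eq_zero_iff_lt.mp h0; omega
    exact_mod_cast this
  have hnat : ((Finset.powersetCard n (Finset.univ : Finset (Fin N))).filter
      (fun S => T ⊆ S)).card * N.descFactorial T.card
      = N.choose n * n.descFactorial T.card := by
    by_cases h : T.card ≤ n
    · rw [count_superset N n T h]
      exact choose_desc T.card h hnN
    · have hfe : (Finset.powersetCard n (Finset.univ : Finset (Fin N))).filter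
          (fun S => T ⊆ S) = ∅ := by
        rw [Finset.filter_eq_empty_iff]
        intro S hS hsub
        rw [Finset.mem_powersetCard] at hS
        exact h (hS.2 ▸ Finset.card_le_card hsub)
      rw [hfe]
      have hz : n.descFactorial T.card = 0 := Nat.descFactorial_eq_zero_iff_lt.mpr (by omega)
      simp [hz]

  rw [hsum]
  have hcast : (((Finset.powersetCard n (Finset.univ : Finset (Fin N))).filter
      (fun S => T ⊆ S)).card : ℝ) * (N.descFactorial T.card : ℝ)
      = (N.choose n : ℝ) * (n.descFactorial T.card : ℝ) := by exact_mod_cast congrArg Nat.cast hnat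
  field_simp
  linarith [hcast]

lemma cast_desc2 (n : ℕ) (hn : 1 ≤ n) : ((n.descFactorial 2 : ℕ) : ℝ) = n * (n - 1) := by
  obtain ⟨k, rfl⟩ : ∃ k, n = k + 1 := ⟨n - 1, by omega⟩
  simp [Nat.descFactorial]
  push_cast
  ring

lemma cast_desc3 (n : ℕ) (hn : 1 ≤ n) :
    ((n.descFactorial 3 : ℕ) : ℝ) = n * (n - 1) * (n - 2) := by
  match n, hn with
  | 1, _ => norm_num [Nat.descFactorial]
  | 2, _ => norm_num [Nat.descFactorial]
  | (k+3), _ =>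
    simp [Nat.descFactorial]
    push_cast
    ring

lemma cast_desc4 (n : ℕ) (hn : 1 ≤ n) :
    ((n.descFactorial 4 : ℕ) : ℝ) = n * (n - 1) * (n - 2) * (n - 3) := by
  match n, hn with
  | 1, _ => norm_num [Nat.descFactorial]
  | 2, _ => norm_num [Nat.descFactorial]
  | 3, _ => norm_num [Nat.descFactorial]
  | (k+4), _ =>
    simp [Nat.descFactorial]
    push_cast
    ring

section Inst
variable {K N : ℕ}

noncomputable def aMat (m : Fin K → ℕ) (v : Fin N → Fin K) (C₀ : SimpleGraph (Fin K))
    (i j : Fin N) : ℝ :=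
  if i = j then 0
  else if v i = v j then ((m (v i) : ℝ))⁻¹
  else if C₀.Adj (v i) (v j) then ((2 : ℝ) * (m (v i) : ℝ) * (m (v j) : ℝ))⁻¹ else 0

lemma aMat_diag (m : Fin K → ℕ) (v : Fin N → Fin K) (C₀ : SimpleGraph (Fin K)) (i : Fin N) :
    aMat m v C₀ i i = 0 := if_pos rfl

lemma aMat_symm (m : Fin K → ℕ) (v : Fin N → Fin K) (C₀ : SimpleGraph (Fin K)) (i j : Fin N) :
    aMat m v C₀ i j = aMat m v C₀ j i := by
  unfold aMat
  rcases eq_or_ne i j with rfl | hij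
  · rfl
  · rw [if_neg hij, if_neg hij.symm]
    rcases eq_or_ne (v i) (v j) with hv | hv
    · rw [if_pos hv, if_pos hv.symm, hv]
    · rw [if_neg hv, if_neg hv.symm]
      by_cases hadj : C₀.Adj (v i) (v j)
      · rw [if_pos hadj, if_pos (hadj.symm), mul_comm ((2:ℝ) * (m (v i) : ℝ)) _]
        ring_nf
      · rw [if_neg hadj, if_neg fun h => hadj h.symm]

/-- summing a function of the value over all indices -/
lemma fiber_sum (m : Fin K → ℕ) (v : Fin N → Fin K)
    (hv : ∀ u, (Finset.univ.filter (fun i => v i = u)).card = m u) (g : Fin K → ℝ) :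
    ∑ i : Fin N, g (v i) = ∑ u, (m u : ℝ) * g u := by
  classical
  rw [← Finset.sum_fiberwise_of_maps_to (g := v) (fun i _ => Finset.mem_univ (v i))
    (fun i => g (v i))]
  refine Finset.sum_congr rfl fun u _ => ?_
  calc ∑ i ∈ Finset.univ.filter (fun i => v i = u), g (v i)
      = ∑ i ∈ Finset.univ.filter (fun i => v i = u), g u := by
        refine Finset.sum_congr rfl fun i hi => ?_
        rw [(Finset.mem_filter.mp hi).2]
    _ = ((Finset.univ.filter (fun i => v i = u)).card : ℝ) * g u := by
        rw [Finset.sum_const, nsmul_eq_mul]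
    _ = (m u : ℝ) * g u := by rw [hv u]

/-- counting members of `S` in a fiber via indicators -/
lemma fiber_indi (v : Fin N → Fin K) (u : Fin K) (S : Finset (Fin N)) :
    ∑ i ∈ Finset.univ.filter (fun i => v i = u), indi i S
      = ((S.filter (fun i => v i = u)).card : ℝ) := by
  classical
  simp only [indi]
  rw [Finset.sum_boole]
  congr 1
  congr 1
  ext i
  simp [Finset.mem_filter, and_comm]
end Inst

section Inst2
variable {K N : ℕ}

lemma row_eq (m : Fin K → ℕ) (hm : ∀ u, 1 ≤ m u) (v : Fin N → Fin K)
    (hv : ∀ u, (Finset.univ.filter (fun i => v i = u)).card = m u)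
    (C₀ : SimpleGraph (Fin K)) (i : Fin N) :
    ∑ j, aMat m v C₀ i j
      = ((m (v i) : ℝ) - 1) * ((m (v i) : ℝ))⁻¹
        + (C₀.degree (v i) : ℝ) * ((2:ℝ) * (m (v i) : ℝ))⁻¹ := by
  classical
  have hmu : (m (v i) : ℝ) ≠ 0 := by
    have := hm (v i); positivity
  rw [← Finset.sum_fiberwise_of_maps_to (g := v) (fun j _ => Finset.mem_univ (v j))
    (fun j => aMat m v C₀ i j)]
  have inner : ∀ w, ∑ j ∈ Finset.univ.filter (fun j => v j = w), aMat m v C₀ i j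
      = (if w = v i then ((m (v i) : ℝ) - 1) * ((m (v i) : ℝ))⁻¹ else 0)
        + (if C₀.Adj (v i) w then ((2:ℝ) * (m (v i) : ℝ))⁻¹ else 0) := by
    intro w
    by_cases hw : w = v i
    · subst hw
      rw [if_pos rfl, if_neg (C₀.irrefl), add_zero]
      have hterm : ∀ j ∈ Finset.univ.filter (fun j => v j = v i), aMat m v C₀ i j
          = ((m (v i) : ℝ))⁻¹ - (if i = j then ((m (v i) : ℝ))⁻¹ else 0) := by
        intro j hj
        have hvj : v j = v i := (Finset.mem_filter.mp hj).2
        rcases eq_or_ne i j with rfl | hij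
        · simp [aMat_diag]
        · rw [aMat, if_neg hij, if_pos hvj.symm]
          simp [hij]
      rw [Finset.sum_congr rfl hterm, Finset.sum_sub_distrib, Finset.sum_const, hv (v i),
        Finset.sum_ite_eq, if_pos (by simp), nsmul_eq_mul]
      ring
    · rw [if_neg hw, zero_add]
      have hterm : ∀ j ∈ Finset.univ.filter (fun j => v j = w), aMat m v C₀ i j
          = (if C₀.Adj (v i) w then ((2:ℝ) * (m (v i) : ℝ) * (m w : ℝ))⁻¹ else 0) := by
        intro j hj
        have hvj : v j = w := (Finset.mem_filter.mp hj).2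
        have hne : v i ≠ v j := by rw [hvj]; exact fun h => hw h.symm
        have hij : i ≠ j := fun h => hne (by rw [h])
        rw [aMat, if_neg hij, if_neg hne, hvj]
      rw [Finset.sum_congr rfl hterm, Finset.sum_const, hv w, nsmul_eq_mul]
      have hmw : (m w : ℝ) ≠ 0 := by have := hm w; positivity
      by_cases hadj : C₀.Adj (v i) w
      · rw [if_pos hadj, if_pos hadj]
        field_simp
      · simp [hadj]
  rw [Finset.sum_congr rfl fun w _ => inner w, Finset.sum_add_distrib]
  congr 1
  · rw [Finset.sum_ite_eq' Finset.univ (v i)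
      (fun _ => ((m (v i) : ℝ) - 1) * ((m (v i) : ℝ))⁻¹)]
    simp
  · rw [← Finset.sum_filter, ← SimpleGraph.neighborFinset_eq_filter, Finset.sum_const,
      SimpleGraph.card_neighborFinset_eq_degree, nsmul_eq_mul]

lemma rowsq_eq (m : Fin K → ℕ) (hm : ∀ u, 1 ≤ m u) (v : Fin N → Fin K)
    (hv : ∀ u, (Finset.univ.filter (fun i => v i = u)).card = m u)
    (C₀ : SimpleGraph (Fin K)) (i : Fin N) :
    ∑ j, (aMat m v C₀ i j)^2
      = ((m (v i) : ℝ) - 1) * (((m (v i) : ℝ))^2)⁻¹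
        + ∑ w ∈ C₀.neighborFinset (v i), ((4:ℝ) * (m (v i) : ℝ)^2 * (m w : ℝ))⁻¹ := by
  classical
  have hmu : (m (v i) : ℝ) ≠ 0 := by
    have := hm (v i); positivity
  rw [← Finset.sum_fiberwise_of_maps_to (g := v) (fun j _ => Finset.mem_univ (v j))
    (fun j => (aMat m v C₀ i j)^2)]
  have inner : ∀ w, ∑ j ∈ Finset.univ.filter (fun j => v j = w), (aMat m v C₀ i j)^2
      = (if w = v i then ((m (v i) : ℝ) - 1) * (((m (v i) : ℝ))^2)⁻¹ else 0)
        + (if C₀.Adj (v i) w then ((4:ℝ) * (m (v i) : ℝ)^2 * (m w : ℝ))⁻¹ else 0) := by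
    intro w
    by_cases hw : w = v i
    · subst hw
      rw [if_pos rfl, if_neg (C₀.irrefl), add_zero]
      have hterm : ∀ j ∈ Finset.univ.filter (fun j => v j = v i), (aMat m v C₀ i j)^2
          = (((m (v i) : ℝ))^2)⁻¹ - (if i = j then (((m (v i) : ℝ))^2)⁻¹ else 0) := by
        intro j hj
        have hvj : v j = v i := (Finset.mem_filter.mp hj).2
        rcases eq_or_ne i j with rfl | hij
        · simp [aMat_diag]
        · rw [aMat, if_neg hij, if_pos hvj.symm]
          simp [hij]
          try rw [sq, mul_inv]
      rw [Finset.sum_congr rfl hterm, Finset.sum_sub_distrib, Finset.sum_const, hv (v i),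
        Finset.sum_ite_eq, if_pos (by simp), nsmul_eq_mul]
      ring
    · rw [if_neg hw, zero_add]
      have hterm : ∀ j ∈ Finset.univ.filter (fun j => v j = w), (aMat m v C₀ i j)^2
          = (if C₀.Adj (v i) w then ((((2:ℝ) * (m (v i) : ℝ) * (m w : ℝ)))^2)⁻¹ else 0) := by
        intro j hj
        have hvj : v j = w := (Finset.mem_filter.mp hj).2
        have hne : v i ≠ v j := by rw [hvj]; exact fun h => hw h.symm
        have hij : i ≠ j := fun h => hne (by rw [h])
        rw [aMat, if_neg hij, if_neg hne, hvj]
        by_cases hadj : C₀.Adj (v i) w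
        · rw [if_pos hadj, if_pos hadj]
          exact inv_pow _ 2
        · simp [hadj]
      rw [Finset.sum_congr rfl hterm, Finset.sum_const, hv w, nsmul_eq_mul]
      have hmw : (m w : ℝ) ≠ 0 := by have := hm w; positivity
      by_cases hadj : C₀.Adj (v i) w
      · rw [if_pos hadj, if_pos hadj]
        field_simp
        ring
      · simp [hadj]
  rw [Finset.sum_congr rfl fun w _ => inner w, Finset.sum_add_distrib]
  congr 1
  · rw [Finset.sum_ite_eq' Finset.univ (v i)
      (fun _ => ((m (v i) : ℝ) - 1) * (((m (v i) : ℝ))^2)⁻¹)]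
    simp
  · rw [← Finset.sum_filter, ← SimpleGraph.neighborFinset_eq_filter]

end Inst2

lemma indi_idem {ι : Type*} [DecidableEq ι] (i : ι) (S : Finset ι) :
    indi i S * indi i S = indi i S := by
  by_cases h : i ∈ S <;> simp [indi, h]

lemma lift_sum_congr {α : Type*} (s : Finset (Sym2 α)) (f g : α → α → ℝ)
    (hf : ∀ p q, f p q = f q p) (hg : ∀ p q, g p q = g q p)
    (h : ∀ p q, f p q = g p q) :
    ∑ e ∈ s, Sym2.lift ⟨f, hf⟩ e = ∑ e ∈ s, Sym2.lift ⟨g, hg⟩ e :=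
  Finset.sum_congr rfl fun e _ =>
    Sym2.inductionOn e fun p q => by rw [Sym2.lift_mk, Sym2.lift_mk]; exact h p q

section Inst3
variable {K N : ℕ}

lemma W_eq (m : Fin K → ℕ) (hm : ∀ u, 1 ≤ m u) (v : Fin N → Fin K)
    (hv : ∀ u, (Finset.univ.filter (fun i => v i = u)).card = m u)
    (C₀ : SimpleGraph (Fin K)) (S : Finset (Fin N)) :
    (∑ u, ((S.filter (fun i => v i = u)).card : ℝ)
        * (((S.filter (fun i => v i = u)).card : ℝ) - 1) / (m u : ℝ))
      + ∑ e ∈ C₀.edgeFinset, Sym2.lift ⟨fun u w =>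
          ((S.filter (fun i => v i = u)).card : ℝ) * ((S.filter (fun i => v i = w)).card : ℝ)
            / ((m u : ℝ) * (m w : ℝ)), fun u w => by ring⟩ e
      = ∑ i, ∑ j, aMat m v C₀ i j * indi i S * indi j S := by
  classical
  set cnt : Fin K → ℝ := fun u => ((S.filter (fun i => v i = u)).card : ℝ) with hcnt
  set fib : Fin K → Finset (Fin N) := fun u => Finset.univ.filter (fun i => v i = u) with hfib
  -- double fiberwise decomposition
  have step1 : ∑ i, ∑ j, aMat m v C₀ i j * indi i S * indi j S
      = ∑ u, ∑ w, ∑ i ∈ fib u, ∑ j ∈ fib w, aMat m v C₀ i j * indi i S * indi j S := by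
    rw [← Finset.sum_fiberwise_of_maps_to (g := v) (fun i _ => Finset.mem_univ (v i))
      (fun i => ∑ j, aMat m v C₀ i j * indi i S * indi j S)]
    refine Finset.sum_congr rfl fun u _ => ?_
    have inner : ∀ i : Fin N, ∑ j, aMat m v C₀ i j * indi i S * indi j S
        = ∑ w, ∑ j ∈ fib w, aMat m v C₀ i j * indi i S * indi j S := fun i =>
      (Finset.sum_fiberwise_of_maps_to (g := v) (fun j _ => Finset.mem_univ (v j))
        (fun j => aMat m v C₀ i j * indi i S * indi j S)).symm
    rw [Finset.sum_congr rfl fun i _ => inner i]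
    exact Finset.sum_comm
  have hmu : ∀ u, (m u : ℝ) ≠ 0 := fun u => by have := hm u; positivity
  have hxsum : ∀ u, ∑ i ∈ fib u, indi i S = cnt u := fun u => fiber_indi v u S
  have block : ∀ u w : Fin K,
      ∑ i ∈ fib u, ∑ j ∈ fib w, aMat m v C₀ i j * indi i S * indi j S
        = (if u = w then ((m u : ℝ))⁻¹ * (cnt u^2 - cnt u) else 0)
          + (if C₀.Adj u w then ((2:ℝ) * (m u : ℝ) * (m w : ℝ))⁻¹ * (cnt u * cnt w) else 0) := by
    intro u w
    rcases eq_or_ne u w with rfl | hne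
    · rw [if_pos rfl, if_neg (C₀.irrefl), add_zero]
      have hterm : ∀ i ∈ fib u, ∀ j ∈ fib u, aMat m v C₀ i j * indi i S * indi j S
          = (m u : ℝ)⁻¹ * (indi i S * indi j S)
            - (if i = j then (m u : ℝ)⁻¹ * (indi i S * indi j S) else 0) := by
        intro i hi j hj
        have hvi : v i = u := (Finset.mem_filter.mp hi).2
        have hvj : v j = u := (Finset.mem_filter.mp hj).2
        rcases eq_or_ne i j with rfl | hij
        · simp [aMat_diag]
        · rw [aMat, if_neg hij, if_pos (hvi.trans hvj.symm), hvi]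
          simp [hij]
          ring
      calc ∑ i ∈ fib u, ∑ j ∈ fib u, aMat m v C₀ i j * indi i S * indi j S
          = ∑ i ∈ fib u, ∑ j ∈ fib u, ((m u : ℝ)⁻¹ * (indi i S * indi j S)
              - (if i = j then (m u : ℝ)⁻¹ * (indi i S * indi j S) else 0)) :=
            Finset.sum_congr rfl fun i hi => Finset.sum_congr rfl fun j hj => hterm i hi j hj
        _ = (∑ i ∈ fib u, ∑ j ∈ fib u, (m u : ℝ)⁻¹ * (indi i S * indi j S))
            - ∑ i ∈ fib u, ∑ j ∈ fib u,
                (if i = j then (m u : ℝ)⁻¹ * (indi i S * indi j S) else 0) := by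
            rw [← Finset.sum_sub_distrib]
            exact Finset.sum_congr rfl fun i _ => Finset.sum_sub_distrib _ _
        _ = (m u : ℝ)⁻¹ * (cnt u * cnt u) - (m u : ℝ)⁻¹ * cnt u := by
            congr 1
            · calc ∑ i ∈ fib u, ∑ j ∈ fib u, (m u : ℝ)⁻¹ * (indi i S * indi j S)
                  = ∑ i ∈ fib u, ∑ j ∈ fib u, ((m u : ℝ)⁻¹ * indi i S) * indi j S :=
                    Finset.sum_congr rfl fun i _ => Finset.sum_congr rfl fun j _ => by ring
                _ = (∑ i ∈ fib u, (m u : ℝ)⁻¹ * indi i S) * (∑ j ∈ fib u, indi j S) :=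
                    (Finset.sum_mul_sum _ _ _ _).symm
                _ = ((m u : ℝ)⁻¹ * cnt u) * cnt u := by
                    rw [← Finset.mul_sum, hxsum u]
                _ = (m u : ℝ)⁻¹ * (cnt u * cnt u) := by ring
            · calc ∑ i ∈ fib u, ∑ j ∈ fib u,
                    (if i = j then (m u : ℝ)⁻¹ * (indi i S * indi j S) else 0)
                  = ∑ i ∈ fib u, (m u : ℝ)⁻¹ * indi i S := by
                    refine Finset.sum_congr rfl fun i hi => ?_
                    rw [Finset.sum_ite_eq (fib u) i
                      (fun j => (m u : ℝ)⁻¹ * (indi i S * indi j S)), if_pos hi, indi_idem]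
                _ = (m u : ℝ)⁻¹ * cnt u := by rw [← Finset.mul_sum, hxsum u]
        _ = (m u : ℝ)⁻¹ * (cnt u^2 - cnt u) := by ring
    · rw [if_neg hne, zero_add]
      have hterm : ∀ i ∈ fib u, ∀ j ∈ fib w, aMat m v C₀ i j * indi i S * indi j S
          = ((if C₀.Adj u w then ((2:ℝ) * (m u : ℝ) * (m w : ℝ))⁻¹ else 0) * indi i S)
              * indi j S := by
        intro i hi j hj
        have hvi : v i = u := (Finset.mem_filter.mp hi).2
        have hvj : v j = w := (Finset.mem_filter.mp hj).2
        have hvne : v i ≠ v j := by rw [hvi, hvj]; exact hne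
        have hij : i ≠ j := fun h => hvne (by rw [h])
        rw [aMat, if_neg hij, if_neg hvne, hvi, hvj]
        try ring
      calc ∑ i ∈ fib u, ∑ j ∈ fib w, aMat m v C₀ i j * indi i S * indi j S
          = ∑ i ∈ fib u, ∑ j ∈ fib w,
              ((if C₀.Adj u w then ((2:ℝ) * (m u : ℝ) * (m w : ℝ))⁻¹ else 0) * indi i S)
                * indi j S :=
            Finset.sum_congr rfl fun i hi => Finset.sum_congr rfl fun j hj => hterm i hi j hj
        _ = (∑ i ∈ fib u, (if C₀.Adj u w then ((2:ℝ) * (m u : ℝ) * (m w : ℝ))⁻¹ else 0)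
              * indi i S) * (∑ j ∈ fib w, indi j S) := (Finset.sum_mul_sum _ _ _ _).symm
        _ = ((if C₀.Adj u w then ((2:ℝ) * (m u : ℝ) * (m w : ℝ))⁻¹ else 0) * cnt u) * cnt w := by
            rw [← Finset.mul_sum, hxsum u, hxsum w]
        _ = (if C₀.Adj u w then ((2:ℝ) * (m u : ℝ) * (m w : ℝ))⁻¹ * (cnt u * cnt w) else 0) := by
            by_cases hadj : C₀.Adj u w
            · rw [if_pos hadj, if_pos hadj]; ring
            · simp [hadj]
  rw [step1, Finset.sum_congr rfl fun u _ => Finset.sum_congr rfl fun w _ => block u w]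
  simp only [Finset.sum_add_distrib]
  congr 1
  · -- diagonal part
    calc ∑ u, ((S.filter (fun i => v i = u)).card : ℝ)
          * (((S.filter (fun i => v i = u)).card : ℝ) - 1) / (m u : ℝ)
        = ∑ u, (m u : ℝ)⁻¹ * (cnt u^2 - cnt u) := by
          refine Finset.sum_congr rfl fun u _ => ?_
          rw [hcnt]
          ring
      _ = ∑ u, ∑ w, (if u = w then (m u : ℝ)⁻¹ * (cnt u^2 - cnt u) else 0) := by
          refine Finset.sum_congr rfl fun u _ => ?_
          rw [Finset.sum_ite_eq Finset.univ u (fun w => (m u : ℝ)⁻¹ * (cnt u^2 - cnt u))]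
          simp
  · -- edge part
    have hf : ∀ p q : Fin K, ((2:ℝ) * (m p : ℝ) * (m q : ℝ))⁻¹ * (cnt p * cnt q)
        = ((2:ℝ) * (m q : ℝ) * (m p : ℝ))⁻¹ * (cnt q * cnt p) := by
      intro p q; ring
    have hds := dart_sum C₀ (fun p q => ((2:ℝ) * (m p : ℝ) * (m q : ℝ))⁻¹ * (cnt p * cnt q)) hf
    calc ∑ e ∈ C₀.edgeFinset, Sym2.lift ⟨fun u w =>
            ((S.filter (fun i => v i = u)).card : ℝ) * ((S.filter (fun i => v i = w)).card : ℝ)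
              / ((m u : ℝ) * (m w : ℝ)), fun u w => by ring⟩ e
        = ∑ e ∈ C₀.edgeFinset, 2 * Sym2.lift ⟨fun p q =>
            ((2:ℝ) * (m p : ℝ) * (m q : ℝ))⁻¹ * (cnt p * cnt q), hf⟩ e := by
          refine Finset.sum_congr rfl fun e _ => Sym2.inductionOn e fun p q => ?_
          rw [Sym2.lift_mk, Sym2.lift_mk]
          show cnt p * cnt q / ((m p : ℝ) * (m q : ℝ))
            = 2 * (((2:ℝ) * (m p : ℝ) * (m q : ℝ))⁻¹ * (cnt p * cnt q))
          rw [div_eq_mul_inv, mul_inv, mul_inv, mul_inv]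
          ring
      _ = 2 * ∑ e ∈ C₀.edgeFinset, Sym2.lift ⟨fun p q =>
            ((2:ℝ) * (m p : ℝ) * (m q : ℝ))⁻¹ * (cnt p * cnt q), hf⟩ e := by
          rw [Finset.mul_sum]
      _ = ∑ u, ∑ w ∈ C₀.neighborFinset u,
            ((2:ℝ) * (m u : ℝ) * (m w : ℝ))⁻¹ * (cnt u * cnt w) := hds.symm
      _ = ∑ u, ∑ w, (if C₀.Adj u w then
            ((2:ℝ) * (m u : ℝ) * (m w : ℝ))⁻¹ * (cnt u * cnt w) else 0) := by
          refine Finset.sum_congr rfl fun u _ => ?_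
          rw [SimpleGraph.neighborFinset_eq_filter, Finset.sum_filter]
end Inst3

section Inst4
variable {K N : ℕ}

lemma A0_eq (m : Fin K → ℕ) (hm : ∀ u, 1 ≤ m u) (hN : N = ∑ u, m u)
    (v : Fin N → Fin K) (hv : ∀ u, (Finset.univ.filter (fun i => v i = u)).card = m u)
    (C₀ : SimpleGraph (Fin K)) :
    ∑ i, ∑ j, aMat m v C₀ i j = (N : ℝ) - (K : ℝ) + (C₀.edgeFinset.card : ℝ) := by
  classical
  have hmu : ∀ u, (m u : ℝ) ≠ 0 := fun u => by have := hm u; positivity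
  rw [Finset.sum_congr rfl fun i (_ : i ∈ Finset.univ) => row_eq m hm v hv C₀ i]
  rw [fiber_sum m v hv (fun u => ((m u : ℝ) - 1) * ((m u : ℝ))⁻¹
      + (C₀.degree u : ℝ) * ((2:ℝ) * (m u : ℝ))⁻¹)]
  have per_u : ∀ u, (m u : ℝ) * (((m u : ℝ) - 1) * ((m u : ℝ))⁻¹
      + (C₀.degree u : ℝ) * ((2:ℝ) * (m u : ℝ))⁻¹)
      = ((m u : ℝ) - 1) + (C₀.degree u : ℝ)/2 := by
    intro u
    have h1 := hmu u
    field_simp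
  rw [Finset.sum_congr rfl fun u (_ : u ∈ Finset.univ) => per_u u]
  have hNr : ∑ u, (m u : ℝ) = (N : ℝ) := by rw [hN]; push_cast; rfl
  have hdeg : ∑ u, (C₀.degree u : ℝ) = 2 * (C₀.edgeFinset.card : ℝ) := by
    exact_mod_cast C₀.sum_degrees_eq_twice_card_edges
  rw [Finset.sum_add_distrib, Finset.sum_sub_distrib, Finset.sum_const, ← Finset.sum_div,
    hNr, hdeg, Finset.card_univ, Fintype.card_fin, nsmul_eq_mul]
  ring

lemma D_eq (m : Fin K → ℕ) (hm : ∀ u, 1 ≤ m u) (hN : N = ∑ u, m u)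
    (v : Fin N → Fin K) (hv : ∀ u, (Finset.univ.filter (fun i => v i = u)).card = m u)
    (C₀ : SimpleGraph (Fin K)) :
    ∑ i, (∑ j, aMat m v C₀ i j)^2
      = ((N : ℝ) - (K : ℝ) + 2 * (C₀.edgeFinset.card : ℝ)
          + (∑ u, (C₀.degree u : ℝ)^2 / (4 * (m u : ℝ)))
          - (∑ u, (C₀.degree u : ℝ) / (m u : ℝ)))
        - ((K : ℝ) - ∑ u, ((m u : ℝ))⁻¹) := by
  classical
  have hmu : ∀ u, (m u : ℝ) ≠ 0 := fun u => by have := hm u; positivity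
  rw [Finset.sum_congr rfl fun i (_ : i ∈ Finset.univ) =>
    congrArg (fun x : ℝ => x^2) (row_eq m hm v hv C₀ i)]
  rw [fiber_sum m v hv (fun u => (((m u : ℝ) - 1) * ((m u : ℝ))⁻¹
      + (C₀.degree u : ℝ) * ((2:ℝ) * (m u : ℝ))⁻¹)^2)]
  have per_u : ∀ u, (m u : ℝ) * ((((m u : ℝ) - 1) * ((m u : ℝ))⁻¹
      + (C₀.degree u : ℝ) * ((2:ℝ) * (m u : ℝ))⁻¹)^2)
      = ((m u : ℝ) - 2 + ((m u : ℝ))⁻¹)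
        + ((C₀.degree u : ℝ) - (C₀.degree u : ℝ) / (m u : ℝ))
        + (C₀.degree u : ℝ)^2 / (4 * (m u : ℝ)) := by
    intro u
    have h1 := hmu u
    field_simp
    ring
  rw [Finset.sum_congr rfl fun u (_ : u ∈ Finset.univ) => per_u u]
  have hNr : ∑ u, (m u : ℝ) = (N : ℝ) := by rw [hN]; push_cast; rfl
  have hdeg : ∑ u, (C₀.degree u : ℝ) = 2 * (C₀.edgeFinset.card : ℝ) := by
    exact_mod_cast C₀.sum_degrees_eq_twice_card_edges
  rw [Finset.sum_add_distrib, Finset.sum_add_distrib, Finset.sum_add_distrib,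
    Finset.sum_sub_distrib, Finset.sum_sub_distrib, Finset.sum_const,
    hNr, hdeg, Finset.card_univ, Fintype.card_fin, nsmul_eq_mul]
  ring

lemma A2_eq (m : Fin K → ℕ) (hm : ∀ u, 1 ≤ m u)
    (v : Fin N → Fin K) (hv : ∀ u, (Finset.univ.filter (fun i => v i = u)).card = m u)
    (C₀ : SimpleGraph (Fin K)) :
    ∑ i, ∑ j, (aMat m v C₀ i j)^2
      = ((K : ℝ) - ∑ u, ((m u : ℝ))⁻¹)
        + (1/2) * ∑ e ∈ C₀.edgeFinset,
            Sym2.lift ⟨fun u w => 1 / ((m u : ℝ) * (m w : ℝ)), fun u w => by ring⟩ e := by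
  classical
  have hmu : ∀ u, (m u : ℝ) ≠ 0 := fun u => by have := hm u; positivity
  rw [Finset.sum_congr rfl fun i (_ : i ∈ Finset.univ) => rowsq_eq m hm v hv C₀ i]
  rw [fiber_sum m v hv (fun u => ((m u : ℝ) - 1) * (((m u : ℝ))^2)⁻¹
      + ∑ w ∈ C₀.neighborFinset u, ((4:ℝ) * (m u : ℝ)^2 * (m w : ℝ))⁻¹)]
  have per_u : ∀ u, (m u : ℝ) * (((m u : ℝ) - 1) * (((m u : ℝ))^2)⁻¹
      + ∑ w ∈ C₀.neighborFinset u, ((4:ℝ) * (m u : ℝ)^2 * (m w : ℝ))⁻¹)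
      = (1 - ((m u : ℝ))⁻¹)
        + ∑ w ∈ C₀.neighborFinset u, ((4:ℝ) * (m u : ℝ) * (m w : ℝ))⁻¹ := by
    intro u
    rw [mul_add]
    congr 1
    · have h1 := hmu u
      field_simp
    · rw [Finset.mul_sum]
      refine Finset.sum_congr rfl fun w _ => ?_
      have := hmu u
      have := hmu w
      field_simp
  rw [Finset.sum_congr rfl fun u (_ : u ∈ Finset.univ) => per_u u, Finset.sum_add_distrib]
  congr 1
  · rw [Finset.sum_sub_distrib, Finset.sum_const, Finset.card_univ, Fintype.card_fin,
      nsmul_eq_mul, mul_one]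
  · have hf : ∀ p q : Fin K, ((4:ℝ) * (m p : ℝ) * (m q : ℝ))⁻¹
        = ((4:ℝ) * (m q : ℝ) * (m p : ℝ))⁻¹ := fun p q => by ring_nf
    rw [dart_sum C₀ (fun p q => ((4:ℝ) * (m p : ℝ) * (m q : ℝ))⁻¹) hf]
    rw [Finset.mul_sum, Finset.mul_sum]
    refine Finset.sum_congr rfl fun e _ => Sym2.inductionOn e fun p q => ?_
    rw [Sym2.lift_mk, Sym2.lift_mk]
    show 2 * ((4:ℝ) * (m p : ℝ) * (m q : ℝ))⁻¹ = 1/2 * (1 / ((m p : ℝ) * (m q : ℝ)))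
    rw [mul_inv, mul_inv]
    ring

end Inst4

noncomputable def rrD (Nn n t : ℕ) : ℝ := (n.descFactorial t : ℝ) / (Nn.descFactorial t : ℝ)

lemma master (K N : ℕ) (m : Fin K → ℕ) (hm : ∀ u, 1 ≤ m u)
    (hN : N = ∑ u, m u) (hNge : 4 ≤ N)
    (v : Fin N → Fin K) (hv : ∀ u, (Finset.univ.filter (fun i => v i = u)).card = m u)
    (C₀ : SimpleGraph (Fin K)) (n : ℕ) (hn : 1 ≤ n) (hn' : n ≤ N - 1)
    (W : Finset (Fin N) → ℝ)
    (hW : ∀ S, W S = (∑ u, ((S.filter (fun i => v i = u)).card : ℝ)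
          * (((S.filter (fun i => v i = u)).card : ℝ) - 1) / (m u : ℝ))
        + ∑ e ∈ C₀.edgeFinset, Sym2.lift ⟨fun u w =>
            ((S.filter (fun i => v i = u)).card : ℝ) * ((S.filter (fun i => v i = w)).card : ℝ)
              / ((m u : ℝ) * (m w : ℝ)), fun u w => by ring⟩ e) :
    (∑ S ∈ Finset.powersetCard n (Finset.univ : Finset (Fin N)),
        (W S - (∑ S' ∈ Finset.powersetCard n (Finset.univ : Finset (Fin N)), W S')
          / (N.choose n : ℝ))^2) / (N.choose n : ℝ)
    = 4 * ((n : ℝ) * ((n : ℝ) - 1) * ((n : ℝ) - 2) / ((N : ℝ) * ((N : ℝ) - 1) * ((N : ℝ) - 2))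
          - (n : ℝ) * ((n : ℝ) - 1) * ((n : ℝ) - 2) * ((n : ℝ) - 3)
            / ((N : ℝ) * ((N : ℝ) - 1) * ((N : ℝ) - 2) * ((N : ℝ) - 3)))
        * ((N : ℝ) - (K : ℝ) + 2 * (C₀.edgeFinset.card : ℝ)
          + (∑ u, (C₀.degree u : ℝ) ^ 2 / (4 * (m u : ℝ)))
          - (∑ u, (C₀.degree u : ℝ) / (m u : ℝ)))
      + ((n : ℝ) * ((n : ℝ) - 1) * ((n : ℝ) - 2) * ((n : ℝ) - 3)
            / ((N : ℝ) * ((N : ℝ) - 1) * ((N : ℝ) - 2) * ((N : ℝ) - 3))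
          - ((n : ℝ) * ((n : ℝ) - 1) / ((N : ℝ) * ((N : ℝ) - 1))) ^ 2)
        * ((N : ℝ) - (K : ℝ) + (C₀.edgeFinset.card : ℝ)) ^ 2
      + ((n : ℝ) * ((n : ℝ) - 1) / ((N : ℝ) * ((N : ℝ) - 1))
          - 2 * ((n : ℝ) * ((n : ℝ) - 1) * ((n : ℝ) - 2)
            / ((N : ℝ) * ((N : ℝ) - 1) * ((N : ℝ) - 2)))
          + (n : ℝ) * ((n : ℝ) - 1) * ((n : ℝ) - 2) * ((n : ℝ) - 3)
            / ((N : ℝ) * ((N : ℝ) - 1) * ((N : ℝ) - 2) * ((N : ℝ) - 3)))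
        * (∑ e ∈ C₀.edgeFinset,
            Sym2.lift ⟨fun u w => 1 / ((m u : ℝ) * (m w : ℝ)), fun u w => by ring⟩ e)
      + 2 * ((n : ℝ) * ((n : ℝ) - 1) / ((N : ℝ) * ((N : ℝ) - 1))
          - 4 * ((n : ℝ) * ((n : ℝ) - 1) * ((n : ℝ) - 2)
            / ((N : ℝ) * ((N : ℝ) - 1) * ((N : ℝ) - 2)))
          + 3 * ((n : ℝ) * ((n : ℝ) - 1) * ((n : ℝ) - 2) * ((n : ℝ) - 3)
            / ((N : ℝ) * ((N : ℝ) - 1) * ((N : ℝ) - 2) * ((N : ℝ) - 3))))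
        * ((K : ℝ) - ∑ u, 1 / (m u : ℝ)) := by
  classical
  have hnN : n ≤ N := by omega
  have hc : (N.choose n : ℝ) ≠ 0 := by
    have := Nat.choose_pos hnN
    positivity
  have hcard : ((Finset.powersetCard n (Finset.univ : Finset (Fin N))).card : ℝ)
      = (N.choose n : ℝ) := by
    rw [Finset.card_powersetCard, Finset.card_univ, Fintype.card_fin]
  have hmom : ∀ T : Finset (Fin N), T.card ≤ 4 →
      ∑ S ∈ Finset.powersetCard n (Finset.univ : Finset (Fin N)),
        (if T ⊆ S then (1:ℝ) else 0) = (N.choose n : ℝ) * rrD N n T.card := by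
    intro T hT
    rw [hmom_builder N n hnN T (by omega)]
    rfl
  have hWs : ∀ S, W S = ∑ i, ∑ j, aMat m v C₀ i j * indi i S * indi j S := fun S =>
    (hW S).trans (W_eq m hm v hv C₀ S)
  simp only [hWs]
  rw [var_core (aMat m v C₀) (aMat_symm m v C₀) (aMat_diag m v C₀)
    (Finset.powersetCard n (Finset.univ : Finset (Fin N))) (N.choose n : ℝ) hc hcard
    (rrD N n) hmom]
  rw [A0_eq m hm hN v hv C₀, D_eq m hm hN v hv C₀, A2_eq m hm v hv C₀]
  have hr2 : rrD N n 2 = (n : ℝ) * ((n : ℝ) - 1) / ((N : ℝ) * ((N : ℝ) - 1)) := by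
    rw [rrD, cast_desc2 n hn, cast_desc2 N (by omega)]
  have hr3 : rrD N n 3 = (n : ℝ) * ((n : ℝ) - 1) * ((n : ℝ) - 2)
      / ((N : ℝ) * ((N : ℝ) - 1) * ((N : ℝ) - 2)) := by
    rw [rrD, cast_desc3 n hn, cast_desc3 N (by omega)]
  have hr4 : rrD N n 4 = (n : ℝ) * ((n : ℝ) - 1) * ((n : ℝ) - 2) * ((n : ℝ) - 3)
      / ((N : ℝ) * ((N : ℝ) - 1) * ((N : ℝ) - 2) * ((N : ℝ) - 3)) := by
    rw [rrD, cast_desc4 n hn, cast_desc4 N (by omega)]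
  rw [hr2, hr3, hr4]
  simp only [one_div]
  ring


/-- **part of Lemma 4 of the paper.**  Variances of the averaging
within-sample edge-counts under the permutation null distribution. -/
theorem variance_R1a_R2a
    -- number of distinct values and multiplicities
    (K : ℕ) (hK : 1 ≤ K) (m : Fin K → ℕ) (hm : ∀ u, 1 ≤ m u)
    -- total sample size
    (N : ℕ) (hN : N = ∑ u, m u) (hNge : 4 ≤ N)
    -- value map with prescribed fiber sizes
    (v : Fin N → Fin K)
    (hv : ∀ u, (Finset.univ.filter (fun i => v i = u)).card = m u)
    -- similarity graph on the distinct values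
    (C₀ : SimpleGraph (Fin K))
    -- sizes of sample 1 and sample 2
    (n₁ n₂ : ℕ) (hn₁ : 1 ≤ n₁) (hn₁' : n₁ ≤ N - 1) (hn₂ : n₂ = N - n₁)
    -- expectation under the permutation null distribution (uniform over
    -- all `n₁`-element subsets of `Fin N`)
    (E : (Finset (Fin N) → ℝ) → ℝ)
    (hE : ∀ f, E f =
      (∑ S ∈ Finset.powersetCard n₁ (Finset.univ : Finset (Fin N)), f S) / (N.choose n₁ : ℝ))
    -- within-group counts
    (n1 : Fin K → Finset (Fin N) → ℝ)
    (hn1 : ∀ u S, n1 u S = ((S.filter (fun i => v i = u)).card : ℝ))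
    (n2 : Fin K → Finset (Fin N) → ℝ)
    (hn2 : ∀ u S, n2 u S = (m u : ℝ) - n1 u S)
    -- the averaging statistics
    (R1a : Finset (Fin N) → ℝ)
    (hR1a : ∀ S, R1a S = ∑ u, n1 u S * (n1 u S - 1) / (m u : ℝ)
        + ∑ e ∈ C₀.edgeFinset,
            Sym2.lift ⟨fun u w => n1 u S * n1 w S / ((m u : ℝ) * (m w : ℝ)),
              fun u w => by ring⟩ e)
    (R2a : Finset (Fin N) → ℝ)
    (hR2a : ∀ S, R2a S = ∑ u, n2 u S * (n2 u S - 1) / (m u : ℝ)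
        + ∑ e ∈ C₀.edgeFinset,
            Sym2.lift ⟨fun u w => n2 u S * n2 w S / ((m u : ℝ) * (m w : ℝ)),
              fun u w => by ring⟩ e)
    -- variance under the permutation null distribution
    (Var : (Finset (Fin N) → ℝ) → ℝ)
    (hVar : ∀ f, Var f = E (fun S => (f S - E f) ^ 2))
    -- the constants p₁, p₂, p₃, q₁, q₂, q₃
    (p₁ p₂ p₃ q₁ q₂ q₃ : ℝ)
    (hp₁ : p₁ = (n₁ : ℝ) * ((n₁ : ℝ) - 1) / ((N : ℝ) * ((N : ℝ) - 1)))
    (hp₂ : p₂ = (n₁ : ℝ) * ((n₁ : ℝ) - 1) * ((n₁ : ℝ) - 2) /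
      ((N : ℝ) * ((N : ℝ) - 1) * ((N : ℝ) - 2)))
    (hp₃ : p₃ = (n₁ : ℝ) * ((n₁ : ℝ) - 1) * ((n₁ : ℝ) - 2) * ((n₁ : ℝ) - 3) /
      ((N : ℝ) * ((N : ℝ) - 1) * ((N : ℝ) - 2) * ((N : ℝ) - 3)))
    (hq₁ : q₁ = (n₂ : ℝ) * ((n₂ : ℝ) - 1) / ((N : ℝ) * ((N : ℝ) - 1)))
    (hq₂ : q₂ = (n₂ : ℝ) * ((n₂ : ℝ) - 1) * ((n₂ : ℝ) - 2) /
      ((N : ℝ) * ((N : ℝ) - 1) * ((N : ℝ) - 2)))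
    (hq₃ : q₃ = (n₂ : ℝ) * ((n₂ : ℝ) - 1) * ((n₂ : ℝ) - 2) * ((n₂ : ℝ) - 3) /
      ((N : ℝ) * ((N : ℝ) - 1) * ((N : ℝ) - 2) * ((N : ℝ) - 3)))
    :
    Var R1a = 4 * (p₂ - p₃) * ((N : ℝ) - (K : ℝ) + 2 * (C₀.edgeFinset.card : ℝ)
        + (∑ u, (C₀.degree u : ℝ) ^ 2 / (4 * (m u : ℝ)))
        - (∑ u, (C₀.degree u : ℝ) / (m u : ℝ)))
      + (p₃ - p₁ ^ 2) * ((N : ℝ) - (K : ℝ) + (C₀.edgeFinset.card : ℝ)) ^ 2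
      + (p₁ - 2 * p₂ + p₃) * (∑ e ∈ C₀.edgeFinset,
          Sym2.lift ⟨fun u w => 1 / ((m u : ℝ) * (m w : ℝ)), fun u w => by ring⟩ e)
      + 2 * (p₁ - 4 * p₂ + 3 * p₃) * ((K : ℝ) - ∑ u, 1 / (m u : ℝ)) ∧
    Var R2a = 4 * (q₂ - q₃) * ((N : ℝ) - (K : ℝ) + 2 * (C₀.edgeFinset.card : ℝ)
        + (∑ u, (C₀.degree u : ℝ) ^ 2 / (4 * (m u : ℝ)))
        - (∑ u, (C₀.degree u : ℝ) / (m u : ℝ)))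
      + (q₃ - q₁ ^ 2) * ((N : ℝ) - (K : ℝ) + (C₀.edgeFinset.card : ℝ)) ^ 2
      + (q₁ - 2 * q₂ + q₃) * (∑ e ∈ C₀.edgeFinset,
          Sym2.lift ⟨fun u w => 1 / ((m u : ℝ) * (m w : ℝ)), fun u w => by ring⟩ e)
      + 2 * (q₁ - 4 * q₂ + 3 * q₃) * ((K : ℝ) - ∑ u, 1 / (m u : ℝ)) := by
  classical
  have hnN : n₁ ≤ N := by omega
  have hn₂1 : 1 ≤ n₂ := by omega
  have hn₂' : n₂ ≤ N - 1 := by omega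
  constructor
  · rw [hp₁, hp₂, hp₃]
    simp only [hVar, hE]
    exact master K N m hm hN hNge v hv C₀ n₁ hn₁ hn₁' R1a
      (fun S => by rw [hR1a S]; simp only [hn1])
  · -- complement argument
    rw [hq₁, hq₂, hq₃]
    simp only [hVar, hE]
    -- the R1a-type statistic
    set Wc : Finset (Fin N) → ℝ := fun T =>
      (∑ u, ((T.filter (fun i => v i = u)).card : ℝ)
          * (((T.filter (fun i => v i = u)).card : ℝ) - 1) / (m u : ℝ))
        + ∑ e ∈ C₀.edgeFinset, Sym2.lift ⟨fun u w =>
            ((T.filter (fun i => v i = u)).card : ℝ) * ((T.filter (fun i => v i = w)).card : ℝ)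
              / ((m u : ℝ) * (m w : ℝ)), fun u w => by ring⟩ e with hWc
    have hcnt_compl : ∀ (u : Fin K) (S : Finset (Fin N)),
        (m u : ℝ) - ((S.filter (fun i => v i = u)).card : ℝ)
          = ((Sᶜ.filter (fun i => v i = u)).card : ℝ) := by
      intro u S
      have hnat : (S.filter (fun i => v i = u)).card + (Sᶜ.filter (fun i => v i = u)).card
          = m u := by
        rw [← Finset.card_union_of_disjoint
          (Finset.disjoint_filter_filter disjoint_compl_right), ← Finset.filter_union,
          Finset.union_compl, hv u]
      have := congrArg (fun x : ℕ => (x : ℝ)) hnat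
      push_cast at this
      linarith
    have hR2W : ∀ S, R2a S = Wc Sᶜ := by
      intro S
      rw [hR2a S, hWc]
      simp only [hn2, hn1, hcnt_compl]
    have hsum_compl : ∀ g : Finset (Fin N) → ℝ,
        ∑ S ∈ Finset.powersetCard n₁ (Finset.univ : Finset (Fin N)), g Sᶜ
          = ∑ S ∈ Finset.powersetCard n₂ (Finset.univ : Finset (Fin N)), g S := by
      intro g
      refine Finset.sum_bij' (fun S _ => Sᶜ) (fun S _ => Sᶜ) ?_ ?_ ?_ ?_ ?_
      · intro S hS
        rw [Finset.mem_powersetCard_univ] at hS ⊢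
        rw [Finset.card_compl, hS, Fintype.card_fin, hn₂]
      · intro S hS
        rw [Finset.mem_powersetCard_univ] at hS ⊢
        rw [Finset.card_compl, hS, Fintype.card_fin]
        omega
      · intro S _
        exact compl_compl S
      · intro S _
        exact compl_compl S
      · intro S _
        rfl
    have hchoose : (N.choose n₁ : ℝ) = (N.choose n₂ : ℝ) := by
      rw [hn₂, Nat.choose_symm hnN]
    calc (∑ S ∈ Finset.powersetCard n₁ (Finset.univ : Finset (Fin N)),
            (R2a S - (∑ S' ∈ Finset.powersetCard n₁ (Finset.univ : Finset (Fin N)), R2a S')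
              / (N.choose n₁ : ℝ))^2) / (N.choose n₁ : ℝ)
        = (∑ S ∈ Finset.powersetCard n₂ (Finset.univ : Finset (Fin N)),
            (Wc S - (∑ S' ∈ Finset.powersetCard n₂ (Finset.univ : Finset (Fin N)), Wc S')
              / (N.choose n₂ : ℝ))^2) / (N.choose n₂ : ℝ) := by
          rw [show ∑ S' ∈ Finset.powersetCard n₁ (Finset.univ : Finset (Fin N)), R2a S'
              = ∑ S' ∈ Finset.powersetCard n₂ (Finset.univ : Finset (Fin N)), Wc S' by
            rw [Finset.sum_congr rfl fun S _ => hR2W S]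
            exact hsum_compl Wc]
          rw [hchoose]
          rw [Finset.sum_congr rfl fun S (_ : S ∈ Finset.powersetCard n₁
            (Finset.univ : Finset (Fin N))) => by rw [hR2W S]]
          rw [hsum_compl (fun S => (Wc S
            - (∑ S' ∈ Finset.powersetCard n₂ (Finset.univ : Finset (Fin N)), Wc S')
              / (N.choose n₂ : ℝ))^2)]
      _ = _ := master K N m hm hN hNge v hv C₀ n₂ hn₂1 hn₂' Wc (fun S => rfl)
end
end

section
/- Assume N ≥ 4. Under the permutation null distribution, E(R_{1,(u)}) = |Ḡ| · p₁, E(R_{2,(u)}) = |Ḡ| · q₁, Var(R_{1,(u)}) = (p₁ − p₃)|Ḡ| + (p₂ − p₃) ∑_{i ∈ Fin N} deg_{Ḡ}(i)(deg_{Ḡ}(i) − 1) + (p₃ − p₁²)|Ḡ|², and Var(R_{2,(u)}) is given by the same formula with q₁, q₂, q₃ in place of p₁, p₂, p₃. -/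
open Finset MeasureTheory
open scoped BigOperators Classical

noncomputable section

namespace MVaux

open Nat

variable {N : ℕ}

/-- vertex set of a `Sym2` as a finset -/
def verts (e : Sym2 (Fin N)) : Finset (Fin N) := Finset.univ.filter (· ∈ e)

lemma mem_verts {e : Sym2 (Fin N)} {x : Fin N} : x ∈ verts e ↔ x ∈ e := by
  simp [verts]

lemma verts_mk (a b : Fin N) : verts s(a, b) = {a, b} := by
  ext x
  simp [verts, Sym2.mem_iff, Finset.mem_insert]

lemma card_verts {e : Sym2 (Fin N)} (he : ¬ e.IsDiag) : (verts e).card = 2 := by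
  induction e with
  | _ a b =>
    rw [Sym2.mk_isDiag_iff] at he
    rw [verts_mk, Finset.card_insert_of_notMem (by simpa using he), Finset.card_singleton]

lemma verts_inj {e f : Sym2 (Fin N)} (he : ¬ e.IsDiag) (hf : ¬ f.IsDiag)
    (h : verts e = verts f) : e = f := by
  induction e with
  | _ a b =>
    induction f with
    | _ c d =>
      rw [Sym2.mk_isDiag_iff] at he hf
      rw [verts_mk, verts_mk] at h
      have hmem := Finset.ext_iff.1 h
      simp only [Finset.mem_insert, Finset.mem_singleton] at hmem
      have ha := (hmem a).1 (Or.inl rfl)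
      have hb := (hmem b).1 (Or.inr rfl)
      rw [Sym2.eq_iff]
      rcases ha with h1 | h1 <;> rcases hb with h2 | h2
      · exact absurd (h1.trans h2.symm) he
      · exact Or.inl ⟨h1, h2⟩
      · exact Or.inr ⟨h1, h2⟩
      · exact absurd (h1.trans h2.symm) he

/-- the number of `n`-subsets of `Fin N` containing a fixed set `T` -/
lemma card_superset (T : Finset (Fin N)) (n : ℕ) :
    ((Finset.powersetCard n (Finset.univ : Finset (Fin N))).filter (fun S => T ⊆ S)).card
      = if T.card ≤ n then (N - T.card).choose (n - T.card) else 0 := by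
  split_ifs with h
  · have : ((Finset.powersetCard n (Finset.univ : Finset (Fin N))).filter (fun S => T ⊆ S)).card
        = (Finset.powersetCard (n - T.card) ((Finset.univ : Finset (Fin N)) \ T)).card := by
      apply Finset.card_bij' (fun S _ => S \ T) (fun S _ => S ∪ T)
      · intro S hS
        simp only [Finset.mem_filter, Finset.mem_powersetCard] at hS
        obtain ⟨⟨_, hcard⟩, hTS⟩ := hS
        rw [Finset.mem_powersetCard]
        exact ⟨Finset.sdiff_subset_sdiff (Finset.subset_univ S) le_rfl,
          by rw [Finset.card_sdiff_of_subset hTS, hcard]⟩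
      · intro S hS
        rw [Finset.mem_powersetCard] at hS
        obtain ⟨hsub, hcard⟩ := hS
        have hdisj : Disjoint S T := Finset.disjoint_left.2 fun x hx ht =>
          (Finset.mem_sdiff.1 (hsub hx)).2 ht
        simp only [Finset.mem_filter, Finset.mem_powersetCard]
        refine ⟨⟨Finset.subset_univ _, ?_⟩, Finset.subset_union_right⟩
        rw [Finset.card_union_of_disjoint hdisj, hcard, Nat.sub_add_cancel h]
      · intro S hS
        simp only [Finset.mem_filter] at hS
        exact Finset.sdiff_union_of_subset hS.2
      · intro S hS
        rw [Finset.mem_powersetCard] at hS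
        have hdisj : Disjoint S T := by
          refine Finset.disjoint_left.2 fun x hx1 hx2 => ?_
          have := hS.1 hx1
          simp only [Finset.mem_sdiff] at this
          exact this.2 hx2
        rw [Finset.union_sdiff_right, Finset.sdiff_eq_self_of_disjoint hdisj]
    rw [this, Finset.card_powersetCard, Finset.card_sdiff_of_subset (Finset.subset_univ T),
      Finset.card_univ, Fintype.card_fin]
  · rw [Finset.card_eq_zero, Finset.filter_eq_empty_iff]
    intro S hS hTS
    rw [Finset.mem_powersetCard] at hS
    exact h (hS.2 ▸ Finset.card_le_card hTS)

/-- ratio of binomial counts as falling-factorial product -/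
lemma choose_ratio {n k : ℕ} (hn : n ≤ N) (hk : k ≤ N) :
    (if k ≤ n then ((N - k).choose (n - k) : ℝ) else 0) / (N.choose n : ℝ)
      = ∏ j ∈ Finset.range k, (((n : ℝ) - (j : ℕ)) / ((N : ℝ) - (j : ℕ))) := by
  have hden : ((N.descFactorial k : ℕ) : ℝ) = ∏ j ∈ Finset.range k, ((N : ℝ) - (j : ℕ)) := by
    rw [Nat.descFactorial_eq_prod_range, Nat.cast_prod]
    refine Finset.prod_congr rfl fun j hj => ?_
    have := Finset.mem_range.1 hj
    rw [Nat.cast_sub (by omega)]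
  rw [Finset.prod_div_distrib, ← hden]
  split_ifs with h
  · have hnum : ((n.descFactorial k : ℕ) : ℝ) = ∏ j ∈ Finset.range k, ((n : ℝ) - (j : ℕ)) := by
      rw [Nat.descFactorial_eq_prod_range, Nat.cast_prod]
      refine Finset.prod_congr rfl fun j hj => ?_
      have := Finset.mem_range.1 hj
      rw [Nat.cast_sub (by omega)]
    rw [← hnum]
    have hC : (0 : ℝ) < (N.choose n : ℝ) := by
      exact_mod_cast Nat.choose_pos hn
    have hDF : (0 : ℝ) < ((N.descFactorial k : ℕ) : ℝ) := by
      have : 0 < N.descFactorial k := Nat.pos_of_ne_zero fun hz => by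
        rw [Nat.descFactorial_eq_zero_iff_lt] at hz; omega
      exact_mod_cast this
    rw [div_eq_div_iff (ne_of_gt hC) (ne_of_gt hDF)]
    rw [← Nat.cast_mul, ← Nat.cast_mul]
    congr 1
    -- ℕ identity : (N-k).choose (n-k) * N.descFactorial k = n.descFactorial k * N.choose n
    have e1 : (N - k).choose (n - k) * ((n - k)! * (N - n)!) = (N - k)! := by
      have h1 := Nat.choose_mul_factorial_mul_factorial (show n - k ≤ N - k by omega)
      rw [show N - k - (n - k) = N - n by omega] at h1
      rw [← mul_assoc]; exact h1
    have e2 : (N - k)! * N.descFactorial k = N ! := Nat.factorial_mul_descFactorial hk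
    have e3 : (n - k)! * n.descFactorial k = n ! := Nat.factorial_mul_descFactorial h
    have e4 : N.choose n * n ! * (N - n)! = N ! := Nat.choose_mul_factorial_mul_factorial hn
    apply Nat.eq_of_mul_eq_mul_right (show 0 < (n - k)! * (N - n)! by positivity)
    calc (N - k).choose (n - k) * N.descFactorial k * ((n - k)! * (N - n)!)
        = ((N - k).choose (n - k) * ((n - k)! * (N - n)!)) * N.descFactorial k := by ring
      _ = (N - k)! * N.descFactorial k := by rw [e1]
      _ = N ! := e2
      _ = N.choose n * n ! * (N - n)! := e4.symm
      _ = N.choose n * ((n - k)! * n.descFactorial k) * (N - n)! := by rw [e3]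
      _ = n.descFactorial k * N.choose n * ((n - k)! * (N - n)!) := by ring
  · rw [Finset.prod_eq_zero (Finset.mem_range.2 (show n < k by omega))
      (by simp : ((n : ℝ) - (n : ℕ)) = 0), zero_div, zero_div]


/-- the superset-count constant -/
def cc (N n k : ℕ) : ℝ := if k ≤ n then ((N - k).choose (n - k) : ℝ) else 0

section Moments

variable (G : SimpleGraph (Fin N))

lemma not_isDiag_of_mem_edgeFinset {e : Sym2 (Fin N)} (he : e ∈ G.edgeFinset) : ¬ e.IsDiag :=
  G.not_isDiag_of_mem_edgeSet (SimpleGraph.mem_edgeFinset.1 he)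

lemma R_eq_sum (S : Finset (Fin N)) :
    ((G.edgeFinset.filter (fun e => ∀ x ∈ e, x ∈ S)).card : ℝ)
      = ∑ e ∈ G.edgeFinset, if verts e ⊆ S then (1 : ℝ) else 0 := by
  rw [Finset.natCast_card_filter]
  refine Finset.sum_congr rfl fun e he => ?_
  refine if_congr ?_ rfl rfl
  constructor
  · intro h x hx; exact h x (mem_verts.1 hx)
  · intro h x hx; exact h (mem_verts.2 hx)

lemma mul_ind (P Q : Prop) :
    (if P then (1 : ℝ) else 0) * (if Q then (1 : ℝ) else 0) = if P ∧ Q then (1 : ℝ) else 0 := by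
  by_cases hP : P <;> by_cases hQ : Q <;> simp [hP, hQ]

lemma key_count (n : ℕ) (T : Finset (Fin N)) :
    (∑ S ∈ Finset.powersetCard n (Finset.univ : Finset (Fin N)),
      if T ⊆ S then (1 : ℝ) else 0) = cc N n T.card := by
  rw [Finset.sum_boole]
  have hc := card_superset T n
  rw [show ((Finset.powersetCard n (Finset.univ : Finset (Fin N))).filter fun S => T ⊆ S)
      = {S ∈ Finset.powersetCard n (Finset.univ : Finset (Fin N)) | T ⊆ S} from rfl] at hc
  rw [hc, cc]
  split_ifs <;> simp

/-- first moment numerator -/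
lemma M1 (n : ℕ) :
    ∑ S ∈ Finset.powersetCard n (Finset.univ : Finset (Fin N)),
      ((G.edgeFinset.filter (fun e => ∀ x ∈ e, x ∈ S)).card : ℝ)
    = (G.edgeFinset.card : ℝ) * cc N n 2 := by
  simp only [R_eq_sum]
  rw [Finset.sum_comm]
  have step : ∀ e ∈ G.edgeFinset,
      (∑ S ∈ Finset.powersetCard n (Finset.univ : Finset (Fin N)),
        if verts e ⊆ S then (1 : ℝ) else 0) = cc N n 2 := by
    intro e he
    rw [key_count, card_verts (not_isDiag_of_mem_edgeFinset G he)]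
  rw [Finset.sum_congr rfl step, Finset.sum_const, nsmul_eq_mul]

lemma inter_card_le {e f : Sym2 (Fin N)} (he : ¬e.IsDiag) (hf : ¬f.IsDiag) (hne : e ≠ f) :
    (verts e ∩ verts f).card ≤ 1 := by
  by_contra hlt
  push_neg at hlt
  have h1 : verts e ∩ verts f = verts e := by
    apply Finset.eq_of_subset_of_card_le Finset.inter_subset_left
    rw [card_verts he]; omega
  have h2 : verts e ∩ verts f = verts f := by
    apply Finset.eq_of_subset_of_card_le Finset.inter_subset_right
    rw [card_verts hf]; omega
  exact hne (verts_inj he hf (h1.symm.trans h2))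

/-- double count of ordered pairs of distinct edges sharing a vertex -/
lemma Dcnt :
    ∑ e ∈ G.edgeFinset, ∑ f ∈ G.edgeFinset.erase e, ((verts e ∩ verts f).card : ℝ)
      = ∑ i : Fin N, (G.degree i : ℝ) * ((G.degree i : ℝ) - 1) := by
  have hcard : ∀ e f : Sym2 (Fin N), ((verts e ∩ verts f).card : ℝ)
      = ∑ i : Fin N, (if i ∈ e then (1 : ℝ) else 0) * (if i ∈ f then (1 : ℝ) else 0) := by
    intro e f
    have hinter : verts e ∩ verts f = Finset.univ.filter (fun i => i ∈ e ∧ i ∈ f) := by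
      ext i; simp [verts]
    rw [hinter, Finset.natCast_card_filter]
    refine Finset.sum_congr rfl fun i _ => ?_
    by_cases h1 : i ∈ e <;> by_cases h2 : i ∈ f <;> simp [h1, h2]
  simp only [hcard]
  have swap1 : ∀ e : Sym2 (Fin N),
      (∑ f ∈ G.edgeFinset.erase e, ∑ i : Fin N,
        (if i ∈ e then (1 : ℝ) else 0) * (if i ∈ f then (1 : ℝ) else 0))
      = ∑ i : Fin N, ∑ f ∈ G.edgeFinset.erase e,
        (if i ∈ e then (1 : ℝ) else 0) * (if i ∈ f then (1 : ℝ) else 0) :=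
    fun e => Finset.sum_comm
  simp only [swap1]
  rw [Finset.sum_comm]
  refine Finset.sum_congr rfl fun i _ => ?_
  have hEsum : ∑ f ∈ G.edgeFinset, (if i ∈ f then (1 : ℝ) else 0) = (G.degree i : ℝ) := by
    rw [Finset.sum_boole]
    congr 1
    rw [← SimpleGraph.card_incidenceFinset_eq_degree]
    congr 1
    ext g
    simp [SimpleGraph.mem_incidenceFinset, Set.mem_toFinset, SimpleGraph.incidenceSet,
      SimpleGraph.mem_edgeFinset]
  have step : ∀ e ∈ G.edgeFinset,
      (∑ f ∈ G.edgeFinset.erase e,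
        (if i ∈ e then (1 : ℝ) else 0) * (if i ∈ f then (1 : ℝ) else 0))
      = if i ∈ e then ((G.degree i : ℝ) - 1) else 0 := by
    intro e he
    have htot := Finset.add_sum_erase G.edgeFinset
      (fun f => if i ∈ f then (1 : ℝ) else 0) he
    rw [← Finset.mul_sum]
    by_cases hie : i ∈ e
    · rw [if_pos hie] at htot
      have h2 : (∑ x ∈ G.edgeFinset.erase e, if i ∈ x then (1 : ℝ) else 0)
          = (G.degree i : ℝ) - 1 := by
        rw [← hEsum, ← htot]; ring
      simp [hie, h2]
    · simp [hie]
  rw [Finset.sum_congr rfl step]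
  have hpull : ∀ e : Sym2 (Fin N),
      (if i ∈ e then ((G.degree i : ℝ) - 1) else 0)
      = ((G.degree i : ℝ) - 1) * (if i ∈ e then (1 : ℝ) else 0) := fun e => by
    by_cases h : i ∈ e <;> simp [h]
  simp only [hpull]
  rw [← Finset.mul_sum, hEsum]
  ring

/-- second moment numerator -/
lemma M2 (n : ℕ) :
    ∑ S ∈ Finset.powersetCard n (Finset.univ : Finset (Fin N)),
      ((G.edgeFinset.filter (fun e => ∀ x ∈ e, x ∈ S)).card : ℝ) ^ 2
    = cc N n 2 * (G.edgeFinset.card : ℝ)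
      + cc N n 3 * (∑ i : Fin N, (G.degree i : ℝ) * ((G.degree i : ℝ) - 1))
      + cc N n 4 * ((G.edgeFinset.card : ℝ) ^ 2 - (G.edgeFinset.card : ℝ)
          - ∑ i : Fin N, (G.degree i : ℝ) * ((G.degree i : ℝ) - 1)) := by
  have expand : ∀ S : Finset (Fin N),
      ((G.edgeFinset.filter (fun e => ∀ x ∈ e, x ∈ S)).card : ℝ) ^ 2
      = ∑ e ∈ G.edgeFinset, ∑ f ∈ G.edgeFinset,
          (if verts e ∪ verts f ⊆ S then (1 : ℝ) else 0) := by
    intro S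
    rw [R_eq_sum, sq, Finset.sum_mul_sum]
    refine Finset.sum_congr rfl fun e _ => Finset.sum_congr rfl fun f _ => ?_
    by_cases h1 : verts e ⊆ S <;> by_cases h2 : verts f ⊆ S <;>
      simp [h1, h2, Finset.union_subset_iff]
  simp only [expand]
  rw [Finset.sum_comm]
  have swap1 : ∀ e : Sym2 (Fin N),
      (∑ S ∈ Finset.powersetCard n (Finset.univ : Finset (Fin N)), ∑ f ∈ G.edgeFinset,
          (if verts e ∪ verts f ⊆ S then (1 : ℝ) else 0))
      = ∑ f ∈ G.edgeFinset, cc N n ((verts e ∪ verts f).card) := by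
    intro e
    rw [Finset.sum_comm]
    exact Finset.sum_congr rfl fun f _ => key_count n _
  simp only [swap1]
  have off : ∀ e ∈ G.edgeFinset, ∀ f ∈ G.edgeFinset.erase e,
      cc N n ((verts e ∪ verts f).card)
      = cc N n 4 + (cc N n 3 - cc N n 4) * ((verts e ∩ verts f).card : ℝ) := by
    intro e he f hf
    obtain ⟨hne, hfE⟩ := Finset.mem_erase.1 hf
    have hde := not_isDiag_of_mem_edgeFinset G he
    have hdf := not_isDiag_of_mem_edgeFinset G hfE
    have hint : (verts e ∩ verts f).card ≤ 1 := inter_card_le hde hdf (Ne.symm hne)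
    have huni : (verts e ∪ verts f).card + (verts e ∩ verts f).card = 4 := by
      rw [Finset.card_union_add_card_inter, card_verts hde, card_verts hdf]
    rcases Nat.le_one_iff_eq_zero_or_eq_one.1 hint with h0 | h1
    · rw [show (verts e ∪ verts f).card = 4 by omega, h0]
      simp
    · rw [show (verts e ∪ verts f).card = 3 by omega, h1]
      push_cast; ring
  have per_e : ∀ e ∈ G.edgeFinset,
      (∑ f ∈ G.edgeFinset, cc N n ((verts e ∪ verts f).card))
      = cc N n 2 + ((G.edgeFinset.card : ℝ) - 1) * cc N n 4
        + (cc N n 3 - cc N n 4)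
          * ∑ f ∈ G.edgeFinset.erase e, ((verts e ∩ verts f).card : ℝ) := by
    intro e he
    rw [← Finset.add_sum_erase _ _ he, Finset.union_self,
      card_verts (not_isDiag_of_mem_edgeFinset G he),
      Finset.sum_congr rfl (off e he), Finset.sum_add_distrib, Finset.sum_const,
      nsmul_eq_mul, ← Finset.mul_sum, Finset.card_erase_of_mem he,
      Nat.cast_sub (Finset.card_pos.2 ⟨e, he⟩), Nat.cast_one]
    ring
  rw [Finset.sum_congr rfl per_e, Finset.sum_add_distrib, Finset.sum_add_distrib,
    Finset.sum_const, Finset.sum_const, ← Finset.mul_sum, Dcnt, nsmul_eq_mul, nsmul_eq_mul]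
  ring

end Moments

lemma cc_ratio {n k : ℕ} (hn : n ≤ N) (hk : k ≤ N) :
    cc N n k / (N.choose n : ℝ)
      = ∏ j ∈ Finset.range k, (((n : ℝ) - (j : ℕ)) / ((N : ℝ) - (j : ℕ))) := by
  rw [cc]; exact choose_ratio hn hk

lemma prod2 (n : ℕ) :
    (∏ j ∈ Finset.range 2, (((n : ℝ) - (j : ℕ)) / ((N : ℝ) - (j : ℕ))))
      = (n : ℝ) * ((n : ℝ) - 1) / ((N : ℝ) * ((N : ℝ) - 1)) := by
  rw [Finset.prod_range_succ, Finset.prod_range_one, _root_.div_mul_div_comm]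
  norm_num

lemma prod3 (n : ℕ) :
    (∏ j ∈ Finset.range 3, (((n : ℝ) - (j : ℕ)) / ((N : ℝ) - (j : ℕ))))
      = (n : ℝ) * ((n : ℝ) - 1) * ((n : ℝ) - 2) / ((N : ℝ) * ((N : ℝ) - 1) * ((N : ℝ) - 2)) := by
  rw [Finset.prod_range_succ, prod2, _root_.div_mul_div_comm]
  norm_num

lemma prod4 (n : ℕ) :
    (∏ j ∈ Finset.range 4, (((n : ℝ) - (j : ℕ)) / ((N : ℝ) - (j : ℕ))))
      = (n : ℝ) * ((n : ℝ) - 1) * ((n : ℝ) - 2) * ((n : ℝ) - 3)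
        / ((N : ℝ) * ((N : ℝ) - 1) * ((N : ℝ) - 2) * ((N : ℝ) - 3)) := by
  rw [Finset.prod_range_succ, prod3, _root_.div_mul_div_comm]
  norm_num

/-- closed form of the mean -/
lemma meanR (G : SimpleGraph (Fin N)) {n : ℕ} (hn : n ≤ N) (hN : 2 ≤ N) :
    (∑ S ∈ Finset.powersetCard n (Finset.univ : Finset (Fin N)),
      ((G.edgeFinset.filter (fun e => ∀ x ∈ e, x ∈ S)).card : ℝ)) / (N.choose n : ℝ)
    = (G.edgeFinset.card : ℝ) * ((n : ℝ) * ((n : ℝ) - 1) / ((N : ℝ) * ((N : ℝ) - 1))) := by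
  rw [M1, mul_div_assoc, cc_ratio hn (by omega), prod2]

/-- closed form of the variance -/
lemma varR (G : SimpleGraph (Fin N)) {n : ℕ} (hn : n ≤ N) (hN : 4 ≤ N) :
    (∑ S ∈ Finset.powersetCard n (Finset.univ : Finset (Fin N)),
        ((G.edgeFinset.filter (fun e => ∀ x ∈ e, x ∈ S)).card : ℝ) ^ 2) / (N.choose n : ℝ)
      - ((∑ S ∈ Finset.powersetCard n (Finset.univ : Finset (Fin N)),
          ((G.edgeFinset.filter (fun e => ∀ x ∈ e, x ∈ S)).card : ℝ)) / (N.choose n : ℝ)) ^ 2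
    = ((n : ℝ) * ((n : ℝ) - 1) / ((N : ℝ) * ((N : ℝ) - 1))
        - (n : ℝ) * ((n : ℝ) - 1) * ((n : ℝ) - 2) * ((n : ℝ) - 3)
          / ((N : ℝ) * ((N : ℝ) - 1) * ((N : ℝ) - 2) * ((N : ℝ) - 3))) * (G.edgeFinset.card : ℝ)
      + ((n : ℝ) * ((n : ℝ) - 1) * ((n : ℝ) - 2) / ((N : ℝ) * ((N : ℝ) - 1) * ((N : ℝ) - 2))
          - (n : ℝ) * ((n : ℝ) - 1) * ((n : ℝ) - 2) * ((n : ℝ) - 3)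
            / ((N : ℝ) * ((N : ℝ) - 1) * ((N : ℝ) - 2) * ((N : ℝ) - 3)))
          * (∑ i : Fin N, (G.degree i : ℝ) * ((G.degree i : ℝ) - 1))
      + ((n : ℝ) * ((n : ℝ) - 1) * ((n : ℝ) - 2) * ((n : ℝ) - 3)
          / ((N : ℝ) * ((N : ℝ) - 1) * ((N : ℝ) - 2) * ((N : ℝ) - 3))
          - ((n : ℝ) * ((n : ℝ) - 1) / ((N : ℝ) * ((N : ℝ) - 1))) ^ 2)
          * (G.edgeFinset.card : ℝ) ^ 2 := by
  have h2 := cc_ratio (N := N) (n := n) (k := 2) hn (by omega)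
  have h3 := cc_ratio (N := N) (n := n) (k := 3) hn (by omega)
  have h4 := cc_ratio (N := N) (n := n) (k := 4) hn (by omega)
  rw [prod2] at h2
  rw [prod3] at h3
  rw [prod4] at h4
  rw [M2, M1]
  have key : ∀ X Y Z : ℝ,
      (cc N n 2 * X + cc N n 3 * Y + cc N n 4 * Z) / (N.choose n : ℝ)
        = cc N n 2 / (N.choose n : ℝ) * X + cc N n 3 / (N.choose n : ℝ) * Y
          + cc N n 4 / (N.choose n : ℝ) * Z := by
    intro X Y Z
    rw [div_eq_mul_inv, div_eq_mul_inv, div_eq_mul_inv, div_eq_mul_inv]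
    ring
  rw [key, mul_div_assoc, h2, h3, h4]
  ring

/-- reindexing by complements -/
lemma sum_compl {n₁ n₂ : ℕ} (hn : n₁ ≤ N) (h : n₂ = N - n₁) (F : Finset (Fin N) → ℝ) :
    ∑ S ∈ Finset.powersetCard n₁ (Finset.univ : Finset (Fin N)), F Sᶜ
      = ∑ S ∈ Finset.powersetCard n₂ (Finset.univ : Finset (Fin N)), F S := by
  apply Finset.sum_nbij' (i := fun S => Sᶜ) (j := fun S => Sᶜ)
  · intro S hS
    rw [Finset.mem_powersetCard_univ] at hS ⊢
    rw [Finset.card_compl, Fintype.card_fin, hS, h]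
  · intro S hS
    rw [Finset.mem_powersetCard_univ] at hS ⊢
    rw [Finset.card_compl, Fintype.card_fin, hS, h]
    omega
  · intro S _; exact compl_compl S
  · intro S _; exact compl_compl S
  · intro S _; rfl

/-- expansion of the variance -/
lemma var_expand {C : ℝ} (hC : C ≠ 0) (P : Finset (Finset (Fin N)))
    (hP : (P.card : ℝ) = C) (f : Finset (Fin N) → ℝ) :
    (∑ S ∈ P, (f S - (∑ T ∈ P, f T) / C) ^ 2) / C
      = (∑ S ∈ P, f S ^ 2) / C - ((∑ S ∈ P, f S) / C) ^ 2 := by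
  set c := (∑ T ∈ P, f T) / C with hc
  have hpt : ∀ S ∈ P, (f S - c) ^ 2 = f S ^ 2 - (2 * c) * f S + c ^ 2 := fun S _ => by ring
  have hsum : ∑ S ∈ P, (f S - c) ^ 2
      = (∑ S ∈ P, f S ^ 2) - (2 * c) * (∑ S ∈ P, f S) + c ^ 2 * P.card := by
    rw [Finset.sum_congr rfl hpt, Finset.sum_add_distrib, Finset.sum_sub_distrib,
      ← Finset.mul_sum, Finset.sum_const, nsmul_eq_mul]
    ring
  rw [hsum, hP, hc]
  field_simp
  ring

end MVaux

/-- **part of Lemma 5 of the paper.**  Means and variances of the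
union within-sample edge-counts under the permutation null distribution. -/
theorem mean_variance_R1u_R2u
    -- number of distinct values and multiplicities
    (K : ℕ) (hK : 1 ≤ K) (m : Fin K → ℕ) (hm : ∀ u, 1 ≤ m u)
    -- total sample size
    (N : ℕ) (hN : N = ∑ u, m u) (hNge : 4 ≤ N)
    -- value map with prescribed fiber sizes
    (v : Fin N → Fin K)
    (hv : ∀ u, (Finset.univ.filter (fun i => v i = u)).card = m u)
    -- similarity graph on the distinct values
    (C₀ : SimpleGraph (Fin K))
    -- sizes of sample 1 and sample 2
    (n₁ n₂ : ℕ) (hn₁ : 1 ≤ n₁) (hn₁' : n₁ ≤ N - 1) (hn₂ : n₂ = N - n₁)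
    -- expectation under the permutation null distribution (uniform over
    -- all `n₁`-element subsets of `Fin N`)
    (E : (Finset (Fin N) → ℝ) → ℝ)
    (hE : ∀ f, E f =
      (∑ S ∈ Finset.powersetCard n₁ (Finset.univ : Finset (Fin N)), f S) / (N.choose n₁ : ℝ))
    -- the union graph Ḡ on the observations
    (Gbar : SimpleGraph (Fin N))
    (hGbar : ∀ i j, Gbar.Adj i j ↔ i ≠ j ∧ (v i = v j ∨ C₀.Adj (v i) (v j)))
    -- the union statistics: edge-counts within sample 1 and within sample 2
    (R1u : Finset (Fin N) → ℝ)
    (hR1u : ∀ S, R1u S =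
      ((Gbar.edgeFinset.filter (fun e => ∀ x ∈ e, x ∈ S)).card : ℝ))
    (R2u : Finset (Fin N) → ℝ)
    (hR2u : ∀ S, R2u S =
      ((Gbar.edgeFinset.filter (fun e => ∀ x ∈ e, x ∉ S)).card : ℝ))
    -- variance under the permutation null distribution
    (Var : (Finset (Fin N) → ℝ) → ℝ)
    (hVar : ∀ f, Var f = E (fun S => (f S - E f) ^ 2))
    -- the constants p₁, p₂, p₃, q₁, q₂, q₃
    (p₁ p₂ p₃ q₁ q₂ q₃ : ℝ)
    (hp₁ : p₁ = (n₁ : ℝ) * ((n₁ : ℝ) - 1) / ((N : ℝ) * ((N : ℝ) - 1)))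
    (hp₂ : p₂ = (n₁ : ℝ) * ((n₁ : ℝ) - 1) * ((n₁ : ℝ) - 2) /
      ((N : ℝ) * ((N : ℝ) - 1) * ((N : ℝ) - 2)))
    (hp₃ : p₃ = (n₁ : ℝ) * ((n₁ : ℝ) - 1) * ((n₁ : ℝ) - 2) * ((n₁ : ℝ) - 3) /
      ((N : ℝ) * ((N : ℝ) - 1) * ((N : ℝ) - 2) * ((N : ℝ) - 3)))
    (hq₁ : q₁ = (n₂ : ℝ) * ((n₂ : ℝ) - 1) / ((N : ℝ) * ((N : ℝ) - 1)))
    (hq₂ : q₂ = (n₂ : ℝ) * ((n₂ : ℝ) - 1) * ((n₂ : ℝ) - 2) /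
      ((N : ℝ) * ((N : ℝ) - 1) * ((N : ℝ) - 2)))
    (hq₃ : q₃ = (n₂ : ℝ) * ((n₂ : ℝ) - 1) * ((n₂ : ℝ) - 2) * ((n₂ : ℝ) - 3) /
      ((N : ℝ) * ((N : ℝ) - 1) * ((N : ℝ) - 2) * ((N : ℝ) - 3)))
    :
    E R1u = (Gbar.edgeFinset.card : ℝ) * p₁ ∧
    E R2u = (Gbar.edgeFinset.card : ℝ) * q₁ ∧
    Var R1u = (p₁ - p₃) * (Gbar.edgeFinset.card : ℝ)
      + (p₂ - p₃) * (∑ i, (Gbar.degree i : ℝ) * ((Gbar.degree i : ℝ) - 1))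
      + (p₃ - p₁ ^ 2) * (Gbar.edgeFinset.card : ℝ) ^ 2 ∧
    Var R2u = (q₁ - q₃) * (Gbar.edgeFinset.card : ℝ)
      + (q₂ - q₃) * (∑ i, (Gbar.degree i : ℝ) * ((Gbar.degree i : ℝ) - 1))
      + (q₃ - q₁ ^ 2) * (Gbar.edgeFinset.card : ℝ) ^ 2 := by
  have hnN : n₁ ≤ N := by omega
  have hn2N : n₂ ≤ N := by omega
  have hC : (N.choose n₁ : ℝ) ≠ 0 := by
    exact_mod_cast (Nat.choose_pos hnN).ne'
  have hchoose : (N.choose n₁ : ℝ) = (N.choose n₂ : ℝ) := by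
    rw [hn₂]
    exact_mod_cast (Nat.choose_symm hnN).symm
  have hPcard : (((Finset.powersetCard n₁ (Finset.univ : Finset (Fin N))).card : ℝ))
      = (N.choose n₁ : ℝ) := by
    rw [Finset.card_powersetCard, Finset.card_univ, Fintype.card_fin]
  -- rewriting `R2u` through complements
  have hcompl : ∀ S : Finset (Fin N),
      ((Gbar.edgeFinset.filter (fun e => ∀ x ∈ e, x ∉ S)).card : ℝ)
      = ((Gbar.edgeFinset.filter (fun e => ∀ x ∈ e, x ∈ Sᶜ)).card : ℝ) := by
    intro S
    have heq : (Gbar.edgeFinset.filter (fun e => ∀ x ∈ e, x ∉ S))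
        = (Gbar.edgeFinset.filter (fun e => ∀ x ∈ e, x ∈ Sᶜ)) :=
      Finset.filter_congr (fun e _ => by simp [Finset.mem_compl])
    rw [heq]
  have hsum1 : (∑ S ∈ Finset.powersetCard n₁ (Finset.univ : Finset (Fin N)),
      ((Gbar.edgeFinset.filter (fun e => ∀ x ∈ e, x ∈ Sᶜ)).card : ℝ))
      = ∑ S ∈ Finset.powersetCard n₂ (Finset.univ : Finset (Fin N)),
      ((Gbar.edgeFinset.filter (fun e => ∀ x ∈ e, x ∈ S)).card : ℝ) :=
    MVaux.sum_compl hnN hn₂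
      (fun T => ((Gbar.edgeFinset.filter (fun e => ∀ x ∈ e, x ∈ T)).card : ℝ))
  have hsum2 : (∑ S ∈ Finset.powersetCard n₁ (Finset.univ : Finset (Fin N)),
      ((Gbar.edgeFinset.filter (fun e => ∀ x ∈ e, x ∈ Sᶜ)).card : ℝ) ^ 2)
      = ∑ S ∈ Finset.powersetCard n₂ (Finset.univ : Finset (Fin N)),
      ((Gbar.edgeFinset.filter (fun e => ∀ x ∈ e, x ∈ S)).card : ℝ) ^ 2 :=
    MVaux.sum_compl hnN hn₂
      (fun T => ((Gbar.edgeFinset.filter (fun e => ∀ x ∈ e, x ∈ T)).card : ℝ) ^ 2)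
  -- variance as second moment minus square of mean
  have hVar' : ∀ f : Finset (Fin N) → ℝ, Var f
      = (∑ S ∈ Finset.powersetCard n₁ (Finset.univ : Finset (Fin N)), f S ^ 2)
          / (N.choose n₁ : ℝ)
        - ((∑ S ∈ Finset.powersetCard n₁ (Finset.univ : Finset (Fin N)), f S)
          / (N.choose n₁ : ℝ)) ^ 2 := by
    intro f
    rw [hVar f]
    simp only [hE]
    exact MVaux.var_expand hC _ hPcard f
  refine ⟨?_, ?_, ?_, ?_⟩
  · rw [hE]
    simp only [hR1u]
    rw [MVaux.meanR Gbar hnN (by omega), hp₁]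
  · rw [hE]
    simp only [hR2u, hcompl]
    rw [hsum1, hchoose, MVaux.meanR Gbar hn2N (by omega), hq₁]
  · rw [hVar' R1u]
    simp only [hR1u]
    rw [hp₁, hp₂, hp₃]
    exact MVaux.varR Gbar hnN hNge
  · rw [hVar' R2u]
    simp only [hR2u, hcompl]
    rw [hsum1, hsum2, hchoose, hq₁, hq₂, hq₃]
    exact MVaux.varR Gbar hn2N hNge
end
end
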